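/- arXiv:2509.19162 — 4 statements merged into one kernel-verified Lean document; each statement's English description precedes it below -/
import Mathlib

section
/- Let n ≥ 3 and let R be the set of reversals r_{i,j} ∈ Sₙ for 1 ≤ i < j ≤ n. The reversal graph Rₙ = Cay(Sₙ, R) contains no triangles (3-cliques) and contains no subgraph isomorphic to the complete bipartite graph K_{2,4}. -/
/-- The Cayley graph of a group `G` with respect to a set `S` of generators.
When `S` is closed under inverses and does not contain the identity, `g` and `h`
are adjacent if and only if `g⁻¹ * h ∈ S`. -/
def cayleyGraph {G : Type*} [Group G] (S : Set G) : SimpleGraph G where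
  Adj g h := g ≠ h ∧ (g⁻¹ * h ∈ S ∨ h⁻¹ * g ∈ S)
  symm := by
    constructor
    rintro g h ⟨hne, hmem⟩
    exact ⟨hne.symm, hmem.symm⟩
  loopless := by
    constructor
    rintro g ⟨hne, -⟩
    exact hne rfl


/-- `σ` is a reversal: for some positions `i < j`, it maps each `k` with `i ≤ k ≤ j` to
`i + j − k` and fixes all other positions. -/
def IsReversal {n : ℕ} (σ : Equiv.Perm (Fin n)) : Prop :=
  ∃ i j : Fin n, i < j ∧
    (∀ k : Fin n, i ≤ k → k ≤ j → ((σ k : ℕ) = (i : ℕ) + (j : ℕ) - (k : ℕ))) ∧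
    (∀ k : Fin n, ¬(i ≤ k ∧ k ≤ j) → σ k = k)

/-- The set of all reversals `r_{i,j}`, `i < j`, in the symmetric group on `n` letters
(here realized as permutations of `Fin n`). -/
def reversals (n : ℕ) : Set (Equiv.Perm (Fin n)) :=
  {σ | IsReversal σ}


namespace RevProofAux

variable {n : ℕ}

lemma apply_left {σ : Equiv.Perm (Fin n)} {i j : Fin n} (hij : i < j)
    (hf : ∀ k : Fin n, i ≤ k → k ≤ j → ((σ k : ℕ) = (i : ℕ) + (j : ℕ) - (k : ℕ))) :
    σ i = j := by
  have h := hf i le_rfl hij.le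
  apply Fin.val_injective
  rw [h]; omega

lemma apply_right {σ : Equiv.Perm (Fin n)} {i j : Fin n} (hij : i < j)
    (hf : ∀ k : Fin n, i ≤ k → k ≤ j → ((σ k : ℕ) = (i : ℕ) + (j : ℕ) - (k : ℕ))) :
    σ j = i := by
  have h := hf j hij.le le_rfl
  apply Fin.val_injective
  rw [h]; omega

lemma fixes_lt {σ : Equiv.Perm (Fin n)} {i j k : Fin n}
    (ho : ∀ k : Fin n, ¬(i ≤ k ∧ k ≤ j) → σ k = k) (hk : k < i) : σ k = k :=
  ho k (fun hc => absurd hk (not_lt.mpr hc.1))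

lemma fixes_gt {σ : Equiv.Perm (Fin n)} {i j k : Fin n}
    (ho : ∀ k : Fin n, ¬(i ≤ k ∧ k ≤ j) → σ k = k) (hk : j < k) : σ k = k :=
  ho k (fun hc => absurd hk (not_lt.mpr hc.2))

lemma invol {σ : Equiv.Perm (Fin n)} {i j : Fin n}
    (hf : ∀ k : Fin n, i ≤ k → k ≤ j → ((σ k : ℕ) = (i : ℕ) + (j : ℕ) - (k : ℕ)))
    (ho : ∀ k : Fin n, ¬(i ≤ k ∧ k ≤ j) → σ k = k) (k : Fin n) : σ (σ k) = k := by
  by_cases hk : i ≤ k ∧ k ≤ j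
  · have hk1 : (i : ℕ) ≤ k := hk.1
    have hk2 : (k : ℕ) ≤ j := hk.2
    have hv := hf k hk.1 hk.2
    have h1 : i ≤ σ k := by rw [Fin.le_def, hv]; omega
    have h2 : σ k ≤ j := by rw [Fin.le_def, hv]; omega
    have hv2 := hf (σ k) h1 h2
    apply Fin.val_injective
    rw [hv2, hv]; omega
  · rw [ho k hk, ho k hk]

lemma mul_self {σ : Equiv.Perm (Fin n)} {i j : Fin n}
    (hf : ∀ k : Fin n, i ≤ k → k ≤ j → ((σ k : ℕ) = (i : ℕ) + (j : ℕ) - (k : ℕ)))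
    (ho : ∀ k : Fin n, ¬(i ≤ k ∧ k ≤ j) → σ k = k) : σ * σ = 1 :=
  Equiv.ext fun k => invol hf ho k

lemma eq_same {σ τ : Equiv.Perm (Fin n)} {i j : Fin n}
    (hfσ : ∀ k : Fin n, i ≤ k → k ≤ j → ((σ k : ℕ) = (i : ℕ) + (j : ℕ) - (k : ℕ)))
    (hoσ : ∀ k : Fin n, ¬(i ≤ k ∧ k ≤ j) → σ k = k)
    (hfτ : ∀ k : Fin n, i ≤ k → k ≤ j → ((τ k : ℕ) = (i : ℕ) + (j : ℕ) - (k : ℕ)))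
    (hoτ : ∀ k : Fin n, ¬(i ≤ k ∧ k ≤ j) → τ k = k) : σ = τ := by
  apply Equiv.ext
  intro k
  by_cases hk : i ≤ k ∧ k ≤ j
  · apply Fin.val_injective
    rw [hfσ k hk.1 hk.2, hfτ k hk.1 hk.2]
  · rw [hoσ k hk, hoτ k hk]

lemma least_unique {g : Equiv.Perm (Fin n)} {x y : Fin n}
    (fx : ∀ k, k < x → g k = k) (mx : g x ≠ x)
    (fy : ∀ k, k < y → g k = k) (my : g y ≠ y) : x = y := by
  rcases lt_trichotomy x y with h | h | h
  · exact absurd (fy x h) mx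
  · exact h
  · exact absurd (fx y h) my


lemma greatest_unique {g : Equiv.Perm (Fin n)} {x y : Fin n}
    (fx : ∀ k, x < k → g k = k) (mx : g x ≠ x)
    (fy : ∀ k, y < k → g k = k) (my : g y ≠ y) : x = y := by
  rcases lt_trichotomy x y with h | h | h
  · exact absurd (fx y h) my
  · exact h
  · exact absurd (fy x h) mx

variable {s s' : Equiv.Perm (Fin n)} {a b e f : Fin n}

lemma fact_fix_lo
    (hos : ∀ k : Fin n, ¬(a ≤ k ∧ k ≤ b) → s k = k)
    (hos' : ∀ k : Fin n, ¬(e ≤ k ∧ k ≤ f) → s' k = k) :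
    ∀ k : Fin n, k < min a e → (s' * s) k = k := by
  intro k hk
  rw [Equiv.Perm.mul_apply, fixes_lt hos (lt_of_lt_of_le hk (min_le_left _ _)),
    fixes_lt hos' (lt_of_lt_of_le hk (min_le_right _ _))]

lemma fact_fix_hi
    (hos : ∀ k : Fin n, ¬(a ≤ k ∧ k ≤ b) → s k = k)
    (hos' : ∀ k : Fin n, ¬(e ≤ k ∧ k ≤ f) → s' k = k) :
    ∀ k : Fin n, max b f < k → (s' * s) k = k := by
  intro k hk
  rw [Equiv.Perm.mul_apply, fixes_gt hos (lt_of_le_of_lt (le_max_left _ _) hk),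
    fixes_gt hos' (lt_of_le_of_lt (le_max_right _ _) hk)]

lemma fact_move_lo (hab : a < b) (hef : e < f)
    (hfs : ∀ k : Fin n, a ≤ k → k ≤ b → ((s k : ℕ) = (a : ℕ) + (b : ℕ) - (k : ℕ)))
    (hos : ∀ k : Fin n, ¬(a ≤ k ∧ k ≤ b) → s k = k)
    (hfs' : ∀ k : Fin n, e ≤ k → k ≤ f → ((s' k : ℕ) = (e : ℕ) + (f : ℕ) - (k : ℕ)))
    (hos' : ∀ k : Fin n, ¬(e ≤ k ∧ k ≤ f) → s' k = k)
    (hne : s ≠ s') :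
    (s' * s) (min a e) ≠ min a e := by
  have habv : (a : ℕ) < b := hab
  have hefv : (e : ℕ) < f := hef
  rcases lt_trichotomy a e with h | h | h
  · rw [min_eq_left h.le, Equiv.Perm.mul_apply, apply_left hab hfs]
    by_cases hb : e ≤ b ∧ b ≤ f
    · intro hcon
      have hv := hfs' b hb.1 hb.2
      have hc := congrArg Fin.val hcon
      have h1 : (e : ℕ) ≤ b := hb.1
      have h2 : (b : ℕ) ≤ f := hb.2
      have h3 : (a : ℕ) < e := h
      omega
    · rw [hos' b hb]
      intro hcon
      have hc := congrArg Fin.val hcon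
      omega
  · rw [min_eq_left h.le, Equiv.Perm.mul_apply, apply_left hab hfs]
    by_cases hb : e ≤ b ∧ b ≤ f
    · intro hcon
      have hv := hfs' b hb.1 hb.2
      have hc := congrArg Fin.val hcon
      have h1 : (e : ℕ) ≤ b := hb.1
      have h2 : (b : ℕ) ≤ f := hb.2
      have hav : (a : ℕ) = e := congrArg Fin.val h
      have hbf : b = f := Fin.val_injective (by omega)
      apply hne
      subst h; subst hbf
      exact eq_same hfs hos hfs' hos'
    · rw [hos' b hb]
      intro hcon
      have hc := congrArg Fin.val hcon
      omega
  · rw [min_eq_right h.le, Equiv.Perm.mul_apply, fixes_lt hos h, apply_left hef hfs']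
    intro hcon
    have hc := congrArg Fin.val hcon
    omega

lemma fact_move_hi (hab : a < b) (hef : e < f)
    (hfs : ∀ k : Fin n, a ≤ k → k ≤ b → ((s k : ℕ) = (a : ℕ) + (b : ℕ) - (k : ℕ)))
    (hos : ∀ k : Fin n, ¬(a ≤ k ∧ k ≤ b) → s k = k)
    (hfs' : ∀ k : Fin n, e ≤ k → k ≤ f → ((s' k : ℕ) = (e : ℕ) + (f : ℕ) - (k : ℕ)))
    (hos' : ∀ k : Fin n, ¬(e ≤ k ∧ k ≤ f) → s' k = k)
    (hne : s ≠ s') :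
    (s' * s) (max b f) ≠ max b f := by
  have habv : (a : ℕ) < b := hab
  have hefv : (e : ℕ) < f := hef
  rcases lt_trichotomy b f with h | h | h
  · rw [max_eq_right h.le, Equiv.Perm.mul_apply, fixes_gt hos h, apply_right hef hfs']
    intro hcon
    have hc := congrArg Fin.val hcon
    omega
  · rw [max_eq_left h.ge, Equiv.Perm.mul_apply, apply_right hab hfs]
    by_cases ha : e ≤ a ∧ a ≤ f
    · intro hcon
      have hv := hfs' a ha.1 ha.2
      have hc := congrArg Fin.val hcon
      have h1 : (e : ℕ) ≤ a := ha.1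
      have h2 : (a : ℕ) ≤ f := ha.2
      have hbv : (b : ℕ) = f := congrArg Fin.val h
      have hae : a = e := Fin.val_injective (by omega)
      apply hne
      subst hae; subst h
      exact eq_same hfs hos hfs' hos'
    · rw [hos' a ha]
      intro hcon
      have hc := congrArg Fin.val hcon
      omega
  · rw [max_eq_left h.le, Equiv.Perm.mul_apply, apply_right hab hfs]
    by_cases ha : e ≤ a ∧ a ≤ f
    · intro hcon
      have hv := hfs' a ha.1 ha.2
      have hc := congrArg Fin.val hcon
      have h1 : (e : ℕ) ≤ a := ha.1
      have h2 : (a : ℕ) ≤ f := ha.2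
      omega
    · rw [hos' a ha]
      intro hcon
      have hc := congrArg Fin.val hcon
      omega

/-- Core case analysis for triangle-freeness, normalized so that
`a < e` or (`a = e` and `b < f`). -/
lemma tri_aux {s s' : Equiv.Perm (Fin n)} {a b e f p q : Fin n}
    (hab : a < b) (hef : e < f) (hpq : p < q)
    (hfs : ∀ k : Fin n, a ≤ k → k ≤ b → ((s k : ℕ) = (a : ℕ) + (b : ℕ) - (k : ℕ)))
    (hos : ∀ k : Fin n, ¬(a ≤ k ∧ k ≤ b) → s k = k)
    (hfs' : ∀ k : Fin n, e ≤ k → k ≤ f → ((s' k : ℕ) = (e : ℕ) + (f : ℕ) - (k : ℕ)))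
    (hos' : ∀ k : Fin n, ¬(e ≤ k ∧ k ≤ f) → s' k = k)
    (hfσ : ∀ k : Fin n, p ≤ k → k ≤ q → (((s' * s) k : ℕ) = (p : ℕ) + (q : ℕ) - (k : ℕ)))
    (hp : p = min a e) (hq : q = max b f)
    (hcase : a < e ∨ (a = e ∧ b < f)) : False := by
  have habv : (a : ℕ) < b := hab
  have hefv : (e : ℕ) < f := hef
  have hpa : p = a := by
    rcases hcase with h | h
    · rw [hp, min_eq_left h.le]
    · rw [hp, min_eq_left h.1.le]
  have key : s' b = q := by
    have h1 := apply_left hpq hfσ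
    rw [hpa, Equiv.Perm.mul_apply, apply_left hab hfs] at h1
    exact h1
  rcases hcase with h | h
  · -- a < e
    have hav : (a : ℕ) < e := h
    by_cases hb : e ≤ b ∧ b ≤ f
    · have hv := hfs' b hb.1 hb.2
      have hqv : (q : ℕ) = (e : ℕ) + f - b := by rw [← key, hv]
      have h1 : (e : ℕ) ≤ b := hb.1
      have h2 : (b : ℕ) ≤ f := hb.2
      rcases eq_or_lt_of_le hb.2 with hbf | hbf
      · -- b = f
        have hqb : q = b := by rw [hq, hbf, max_self]
        have hqbv := congrArg Fin.val hqb
        have hbfv := congrArg Fin.val hbf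
        omega
      · -- b < f
        have hqf : q = f := by rw [hq, max_eq_right hbf.le]
        have hqfv := congrArg Fin.val hqf
        have h2' := apply_right hpq hfσ
        rw [hqf, hpa, Equiv.Perm.mul_apply, fixes_gt hos hbf, apply_right hef hfs'] at h2'
        have := congrArg Fin.val h2'
        omega
    · -- b outside [e, f]
      have hqb : q = b := by rw [← key, hos' b hb]
      have hfb : f ≤ b := max_eq_left_iff.mp (hq.symm.trans hqb)
      have hfbv : (f : ℕ) ≤ b := hfb
      have heb : e ≤ b := (lt_of_lt_of_le hef hfb).le
      have hse : (s e : ℕ) = (a : ℕ) + b - e := hfs e h.le heb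
      have hx1 : a ≤ s e := by rw [Fin.le_def, hse]; omega
      have hx2 : s e ≤ b := by rw [Fin.le_def, hse]; omega
      have hσx := hfσ (s e) (by rw [hpa]; exact hx1) (by rw [hqb]; exact hx2)
      rw [Equiv.Perm.mul_apply, invol hfs hos e, apply_left hef hfs'] at hσx
      have hpav := congrArg Fin.val hpa
      have hqbv := congrArg Fin.val hqb
      omega
  · -- a = e and b < f
    have hqf : q = f := by rw [hq, max_eq_right h.2.le]
    have hav : (a : ℕ) = e := congrArg Fin.val h.1
    have heb : e ≤ b := h.1 ▸ hab.le
    have hv := hfs' b heb h.2.le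
    have hqv : (q : ℕ) = (e : ℕ) + f - b := by rw [← key, hv]
    have hqfv := congrArg Fin.val hqf
    have h1 : (e : ℕ) ≤ b := heb
    have h2 : (b : ℕ) < f := h.2
    omega

/-- The product of two reversals is never a reversal. -/
theorem prod_not_rev {s s' : Equiv.Perm (Fin n)} (hs : IsReversal s) (hs' : IsReversal s') :
    ¬ IsReversal (s' * s) := by
  obtain ⟨a, b, hab, hfs, hos⟩ := hs
  obtain ⟨e, f, hef, hfs', hos'⟩ := hs'
  rintro ⟨p, q, hpq, hfσ, hoσ⟩
  by_cases hne : s = s'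
  · have h1 : s' * s = 1 := by rw [hne]; exact mul_self hfs' hos'
    have h2 := apply_left hpq hfσ
    rw [h1, Equiv.Perm.one_apply] at h2
    exact absurd h2 hpq.ne
  have hp : p = min a e := least_unique (fun k hk => fixes_lt hoσ hk)
      (by rw [apply_left hpq hfσ]; exact hpq.ne')
      (fact_fix_lo hos hos') (fact_move_lo hab hef hfs hos hfs' hos' hne)
  have hq : q = max b f := greatest_unique (fun k hk => fixes_gt hoσ hk)
      (by rw [apply_right hpq hfσ]; exact hpq.ne)
      (fact_fix_hi hos hos') (fact_move_hi hab hef hfs hos hfs' hos' hne)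
  have hcomm : s * s' = s' * s := by
    have hinv1 : s⁻¹ = s := by rw [inv_eq_iff_mul_eq_one]; exact mul_self hfs hos
    have hinv2 : s'⁻¹ = s' := by rw [inv_eq_iff_mul_eq_one]; exact mul_self hfs' hos'
    have hinv3 : (s' * s)⁻¹ = s' * s := by rw [inv_eq_iff_mul_eq_one]; exact mul_self hfσ hoσ
    calc s * s' = (s' * s)⁻¹ := by rw [mul_inv_rev, hinv1, hinv2]
      _ = s' * s := hinv3
  have hfσ' : ∀ k : Fin n, p ≤ k → k ≤ q → (((s * s') k : ℕ) = (p : ℕ) + (q : ℕ) - (k : ℕ)) := by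
    intro k hk1 hk2; rw [hcomm]; exact hfσ k hk1 hk2
  rcases lt_trichotomy a e with h | h | h
  · exact tri_aux hab hef hpq hfs hos hfs' hos' hfσ hp hq (Or.inl h)
  · rcases lt_trichotomy b f with h2 | h2 | h2
    · exact tri_aux hab hef hpq hfs hos hfs' hos' hfσ hp hq (Or.inr ⟨h, h2⟩)
    · apply hne; subst h; subst h2; exact eq_same hfs hos hfs' hos'
    · exact tri_aux hef hab hpq hfs' hos' hfs hos hfσ'
        (by rw [hp, min_comm]) (by rw [hq, max_comm]) (Or.inr ⟨h.symm, h2⟩)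
  · exact tri_aux hef hab hpq hfs' hos' hfs hos hfσ'
      (by rw [hp, min_comm]) (by rw [hq, max_comm]) (Or.inl h)

/-- A non-identity permutation `h` does not admit four distinct reversals `s`
with `h * s` also a reversal. -/
theorem key {h : Equiv.Perm (Fin n)} (hh : h ≠ 1) {s : Fin 4 → Equiv.Perm (Fin n)}
    (hinj : Function.Injective s) (hrev : ∀ i, IsReversal (s i))
    (hrev2 : ∀ i, IsReversal (h * s i)) : False := by
  classical
  choose α β hab hfs hos using hrev
  choose ε φ hef hfs' hos' using hrev2
  have hfac : ∀ i, (h * s i) * s i = h := by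
    intro i
    rw [mul_assoc, mul_self (hfs i) (hos i), mul_one]
  have hne : ∀ i, s i ≠ h * s i := by
    intro i hcon
    apply hh
    have : h * s i = 1 * s i := by rw [← hcon, one_mul]
    exact mul_right_cancel this
  set m := min (α 0) (ε 0) with hm
  set M := max (β 0) (φ 0) with hM
  have hmin : ∀ i, min (α i) (ε i) = m := by
    intro i
    refine least_unique (g := h) ?_ ?_ ?_ ?_
    · intro k hk
      rw [← hfac i]; exact fact_fix_lo (hos i) (hos' i) k hk
    · rw [← hfac i]; exact fact_move_lo (hab i) (hef i) (hfs i) (hos i) (hfs' i) (hos' i) (hne i)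
    · intro k hk
      rw [← hfac 0]; exact fact_fix_lo (hos 0) (hos' 0) k hk
    · rw [← hfac 0]; exact fact_move_lo (hab 0) (hef 0) (hfs 0) (hos 0) (hfs' 0) (hos' 0) (hne 0)
  have hmax : ∀ i, max (β i) (φ i) = M := by
    intro i
    refine greatest_unique (g := h) ?_ ?_ ?_ ?_
    · intro k hk
      rw [← hfac i]; exact fact_fix_hi (hos i) (hos' i) k hk
    · rw [← hfac i]; exact fact_move_hi (hab i) (hef i) (hfs i) (hos i) (hfs' i) (hos' i) (hne i)
    · intro k hk
      rw [← hfac 0]; exact fact_fix_hi (hos 0) (hos' 0) k hk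
    · rw [← hfac 0]; exact fact_move_hi (hab 0) (hef 0) (hfs 0) (hos 0) (hfs' 0) (hos' 0) (hne 0)
  have hαε : ∀ i, α i = m ∨ ε i = m := by
    intro i
    rcases le_total (α i) (ε i) with hle | hle
    · left; rw [← hmin i, min_eq_left hle]
    · right; rw [← hmin i, min_eq_right hle]
  have hβφ : ∀ i, β i = M ∨ φ i = M := by
    intro i
    rcases le_total (β i) (φ i) with hle | hle
    · right; rw [← hmax i, max_eq_right hle]
    · left; rw [← hmax i, max_eq_left hle]
  have hmα : ∀ i, m ≤ α i := by
    intro i; rw [← hmin i]; exact min_le_left _ _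
  have hβM : ∀ i, β i ≤ M := by
    intro i; rw [← hmax i]; exact le_max_left _ _
  -- in each of the three classes below, `h * s i` (hence `s i`) is determined
  have hclass1 : ∀ i j, α i = m → β i = M → α j = m → β j = M → s i = s j := by
    intro i j h1 h2 h3 h4
    have hfi := hfs i; have hoi := hos i
    have hfj := hfs j; have hoj := hos j
    rw [h1, h2] at hfi hoi
    rw [h3, h4] at hfj hoj
    exact eq_same hfi hoi hfj hoj
  have hsij : ∀ i j, h * s i = h * s j → s i = s j := fun i j hc => mul_left_cancel hc
  have hclass2 : ∀ i, α i ≠ m → β i = M → (ε i = m ∧ φ i = h m) := by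
    intro i h1 h2
    have hεm : ε i = m := (hαε i).resolve_left h1
    refine ⟨hεm, ?_⟩
    have hmlt : m < α i := lt_of_le_of_ne (hmα i) (Ne.symm h1)
    have hsm : s i m = m := fixes_lt (hos i) hmlt
    have h3 : (h * s i) (ε i) = φ i := apply_left (hef i) (hfs' i)
    rw [← hfac i, Equiv.Perm.mul_apply, hsm, ← hεm]
    exact h3.symm ▸ rfl
  have hclass3 : ∀ i, β i ≠ M → (φ i = M ∧ ε i = h M) := by
    intro i h1
    have hφM : φ i = M := (hβφ i).resolve_left h1
    refine ⟨hφM, ?_⟩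
    have hMlt : β i < M := lt_of_le_of_ne (hβM i) h1
    have hsM : s i M = M := fixes_gt (hos i) hMlt
    have h3 : (h * s i) (φ i) = ε i := apply_right (hef i) (hfs' i)
    rw [← hfac i, Equiv.Perm.mul_apply, hsM, ← hφM]
    exact h3.symm ▸ rfl
  -- pigeonhole
  let c : Fin 4 → Fin 3 := fun i => if β i = M then (if α i = m then 0 else 1) else 2
  obtain ⟨i, j, hij, hcij⟩ := Fintype.exists_ne_map_eq_of_card_lt c (by simp)
  apply hij
  apply hinj
  by_cases hβi : β i = M <;> by_cases hβj : β j = M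
  · by_cases hαi : α i = m <;> by_cases hαj : α j = m
    · exact hclass1 i j hαi hβi hαj hβj
    · exfalso; simp only [c, if_pos hβi, if_pos hβj, if_pos hαi, if_neg hαj] at hcij
      exact absurd hcij (by decide)
    · exfalso; simp only [c, if_pos hβi, if_pos hβj, if_neg hαi, if_pos hαj] at hcij
      exact absurd hcij (by decide)
    · -- class 2 for both
      obtain ⟨hεi, hφi⟩ := hclass2 i hαi hβi
      obtain ⟨hεj, hφj⟩ := hclass2 j hαj hβj
      apply hsij
      have hfi := hfs' i; have hoi := hos' i
      have hfj := hfs' j; have hoj := hos' j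
      rw [hεi, hφi] at hfi hoi
      rw [hεj, hφj] at hfj hoj
      exact eq_same hfi hoi hfj hoj
  · exfalso
    simp only [c, if_pos hβi, if_neg hβj] at hcij
    split_ifs at hcij <;> exact absurd hcij (by decide)
  · exfalso
    simp only [c, if_neg hβi, if_pos hβj] at hcij
    split_ifs at hcij <;> exact absurd hcij (by decide)
  · -- class 3 for both
    obtain ⟨hφi, hεi⟩ := hclass3 i hβi
    obtain ⟨hφj, hεj⟩ := hclass3 j hβj
    apply hsij
    have hfi := hfs' i; have hoi := hos' i
    have hfj := hfs' j; have hoj := hos' j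
    rw [hεi, hφi] at hfi hoi
    rw [hεj, hφj] at hfj hoj
    exact eq_same hfi hoi hfj hoj


lemma rev_inv {σ : Equiv.Perm (Fin n)} (h : IsReversal σ) : σ⁻¹ = σ := by
  obtain ⟨i, j, hij, hf, ho⟩ := h
  rw [inv_eq_iff_mul_eq_one]
  exact mul_self hf ho

lemma mem_of_adj {u v : Equiv.Perm (Fin n)}
    (hadj : (cayleyGraph (reversals n)).Adj u v) : u⁻¹ * v ∈ reversals n := by
  obtain ⟨hne, hmem | hmem⟩ := hadj
  · exact hmem
  · have h1 : (v⁻¹ * u)⁻¹ = u⁻¹ * v := by rw [mul_inv_rev, inv_inv]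
    rw [← h1, rev_inv hmem]
    exact hmem

end RevProofAux

/-- The reversal graph `Rₙ` (`n ≥ 3`) contains no triangles and no subgraph isomorphic
to the complete bipartite graph `K_{2,4}` (a subgraph isomorphic to `K_{2,4}` is the
same as an injective graph homomorphism from `K_{2,4}`). -/
theorem reversals_triangleFree_and_K24Free (n : ℕ) (hn : 3 ≤ n) :
    (cayleyGraph (reversals n)).CliqueFree 3 ∧
      ¬∃ f : completeBipartiteGraph (Fin 2) (Fin 4) →g cayleyGraph (reversals n),
        Function.Injective f := by
  constructor
  · intro t ht
    obtain ⟨x, y, z, hxy, hxz, hyz, rfl⟩ := Finset.card_eq_three.mp ht.card_eq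
    have hcl := ht.isClique
    have h1 := RevProofAux.mem_of_adj (hcl (by simp) (by simp) hxy)
    have h2 := RevProofAux.mem_of_adj (hcl (by simp) (by simp) hyz)
    have h3 := RevProofAux.mem_of_adj (hcl (by simp) (by simp) hxz)
    refine RevProofAux.prod_not_rev h2 h1 ?_
    have heq : (x⁻¹ * y) * (y⁻¹ * z) = x⁻¹ * z := by group
    rw [heq]
    exact h3
  · rintro ⟨f, hf⟩
    have adj : ∀ (a : Fin 2) (b : Fin 4),
        (cayleyGraph (reversals n)).Adj (f (Sum.inl a)) (f (Sum.inr b)) :=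
      fun a b => f.map_adj (by simp)
    refine RevProofAux.key (h := (f (Sum.inl 1))⁻¹ * f (Sum.inl 0))
      (s := fun b => (f (Sum.inl 0))⁻¹ * f (Sum.inr b)) ?_ ?_ ?_ ?_
    · intro hcon
      have := hf (inv_mul_eq_one.mp hcon)
      simp at this
    · intro b b' hbb
      have := hf (mul_left_cancel hbb)
      simpa using this
    · exact fun b => RevProofAux.mem_of_adj (adj 0 b)
    · intro b
      have hb := RevProofAux.mem_of_adj (adj 1 b)
      have heq : ((f (Sum.inl 1))⁻¹ * f (Sum.inl 0)) * ((f (Sum.inl 0))⁻¹ * f (Sum.inr b))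
          = (f (Sum.inl 1))⁻¹ * f (Sum.inr b) := by group
      show IsReversal _
      rw [heq]
      exact hb
end

section
/- Let n ≥ 3 and let R be the set of reversals r_{i,j} ∈ Sₙ for 1 ≤ i < j ≤ n. In the reversal graph Rₙ = Cay(Sₙ, R), the number of permutations at distance exactly 1 from the identity equals n(n−1)/2, and the number of permutations at distance exactly 2 from the identity equals (n⁴ − 2n³ − n² − 16n + 42)/6. -/
/-- value-level reversal function -/
def rf (n i j x : ℕ) : ℕ := if i ≤ x ∧ x ≤ j ∧ j < n then i + j - x else x

lemma rf_lt {n i j x : ℕ} (hx : x < n) : rf n i j x < n := by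
  unfold rf; split_ifs with h
  · omega
  · exact hx

/-- the reversal `r_{i,j}` as a permutation (junk = identity when out of range) -/
def revPerm (n i j : ℕ) : Equiv.Perm (Fin n) where
  toFun x := ⟨rf n i j x.val, rf_lt x.isLt⟩
  invFun x := ⟨rf n i j x.val, rf_lt x.isLt⟩
  left_inv x := by
    apply Fin.ext; simp only [rf]; split_ifs <;> omega
  right_inv x := by
    apply Fin.ext; simp only [rf]; split_ifs <;> omega

@[simp] lemma revPerm_val {n i j : ℕ} (x : Fin n) : (revPerm n i j x).val = rf n i j x.val := rfl

lemma prod_val {n i j k l : ℕ} (x : Fin n) :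
    ((revPerm n i j * revPerm n k l) x).val = rf n i j (rf n k l x.val) := rfl

lemma revPerm_isReversal {n i j : ℕ} (hij : i < j) (hj : j < n) :
    IsReversal (revPerm n i j) := by
  refine ⟨⟨i, by omega⟩, ⟨j, hj⟩, by simp [Fin.lt_def, hij], ?_, ?_⟩
  · intro k hik hkj
    simp only [revPerm_val, rf]
    rw [Fin.le_def] at hik hkj
    simp only [Fin.val_mk] at hik hkj ⊢
    rw [if_pos ⟨hik, hkj, hj⟩]
  · intro k hk
    rw [Fin.le_def, Fin.le_def] at hk
    simp only [Fin.val_mk] at hk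
    apply Fin.ext
    simp only [revPerm_val, rf]
    split_ifs with h
    · exact absurd ⟨h.1, h.2.1⟩ hk
    · rfl

lemma isReversal_iff {n : ℕ} {σ : Equiv.Perm (Fin n)} :
    IsReversal σ ↔ ∃ i j : ℕ, i < j ∧ j < n ∧ σ = revPerm n i j := by
  constructor
  · rintro ⟨i, j, hij, hin, hout⟩
    refine ⟨i.val, j.val, by rwa [Fin.lt_def] at hij, j.isLt, ?_⟩
    ext k
    simp only [revPerm_val, rf]
    split_ifs with h
    · have := hin k (Fin.le_def.mpr h.1) (Fin.le_def.mpr h.2.1)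
      omega
    · have hk : ¬((i ≤ k) ∧ (k ≤ j)) := by
        rintro ⟨h1, h2⟩
        exact h ⟨Fin.le_def.mp h1, Fin.le_def.mp h2, j.isLt⟩
      rw [hout k hk]
  · rintro ⟨i, j, hij, hj, rfl⟩
    exact revPerm_isReversal hij hj

lemma revPerm_mul_self {n i j : ℕ} : revPerm n i j * revPerm n i j = 1 := by
  ext x
  simp only [prod_val, rf, Equiv.Perm.one_apply]
  split_ifs <;> omega

lemma reversal_inv_eq {n : ℕ} {σ : Equiv.Perm (Fin n)} (h : IsReversal σ) : σ⁻¹ = σ := by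
  obtain ⟨i, j, _, _, rfl⟩ := isReversal_iff.mp h
  rfl

lemma one_not_reversal {n : ℕ} : (1 : Equiv.Perm (Fin n)) ∉ reversals n := by
  rintro ⟨i, j, hij, hin, -⟩
  have := hin i le_rfl hij.le
  simp only [Equiv.Perm.one_apply] at this
  rw [Fin.lt_def] at hij
  omega

lemma adj_one_iff {n : ℕ} {π : Equiv.Perm (Fin n)} :
    (cayleyGraph (reversals n)).Adj 1 π ↔ π ∈ reversals n := by
  constructor
  · rintro ⟨hne, h | h⟩
    · simpa using h
    · simp only [mul_one] at h
      have := reversal_inv_eq h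
      rw [inv_inv] at this
      rw [this]; exact h
  · intro h
    refine ⟨fun h1 => one_not_reversal (h1 ▸ h), Or.inl (by simpa using h)⟩

lemma adj_iff {n : ℕ} {x y : Equiv.Perm (Fin n)} :
    (cayleyGraph (reversals n)).Adj x y ↔ x ≠ y ∧ x⁻¹ * y ∈ reversals n := by
  constructor
  · rintro ⟨hne, h | h⟩
    · exact ⟨hne, h⟩
    · refine ⟨hne, ?_⟩
      have := reversal_inv_eq h
      rw [mul_inv_rev, inv_inv] at this
      rw [← this] at h; exact h
  · rintro ⟨hne, h⟩
    exact ⟨hne, Or.inl h⟩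

lemma dist_one_iff {n : ℕ} {π : Equiv.Perm (Fin n)} :
    (cayleyGraph (reversals n)).dist 1 π = 1 ↔ π ∈ reversals n := by
  rw [SimpleGraph.dist_eq_one_iff_adj, adj_one_iff]

lemma dist_two_iff {n : ℕ} {π : Equiv.Perm (Fin n)} :
    (cayleyGraph (reversals n)).dist 1 π = 2 ↔
      π ∉ reversals n ∧ π ≠ 1 ∧
        ∃ a b, a ∈ reversals n ∧ b ∈ reversals n ∧ π = a * b := by
  constructor
  · intro h
    have hnR : π ∉ reversals n := by
      intro hR
      have := dist_one_iff.mpr hR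
      omega
    have hne : π ≠ 1 := by
      rintro rfl
      rw [SimpleGraph.dist_self] at h
      omega
    obtain ⟨p, hp⟩ := SimpleGraph.exists_walk_of_dist_ne_zero (by omega :
      (cayleyGraph (reversals n)).dist 1 π ≠ 0)
    rw [h] at hp
    match p, hp with
    | SimpleGraph.Walk.cons' _ y _ hadj q, hp =>
      have hq : q.length = 1 := by simpa using hp
      have hadj2 := q.adj_of_length_eq_one hq
      have hy : y ∈ reversals n := adj_one_iff.mp hadj
      obtain ⟨-, hb⟩ := adj_iff.mp hadj2
      exact ⟨hnR, hne, y, y⁻¹ * π, hy, hb, by group⟩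
  · rintro ⟨hnR, hne, a, b, ha, hb, rfl⟩
    have hadj1 : (cayleyGraph (reversals n)).Adj 1 a := adj_one_iff.mpr ha
    have hadj2 : (cayleyGraph (reversals n)).Adj a (a * b) := by
      rw [adj_iff]
      constructor
      · intro hx
        apply one_not_reversal
        have hb1 : b = 1 := by
          have : a * b = a * 1 := by rw [mul_one, ← hx]
          exact mul_left_cancel this
        rwa [hb1] at hb
      · simpa using hb
    have hle : (cayleyGraph (reversals n)).dist 1 (a * b) ≤ 2 := by
      have := SimpleGraph.dist_le (SimpleGraph.Walk.cons hadj1 (hadj2.toWalk))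
      simpa using this
    have h0 : (cayleyGraph (reversals n)).dist 1 (a * b) ≠ 0 := by
      rw [SimpleGraph.dist_ne_zero_iff_ne_and_reachable]
      exact ⟨fun h => hne h.symm, ⟨SimpleGraph.Walk.cons hadj1 (hadj2.toWalk)⟩⟩
    have h1 : (cayleyGraph (reversals n)).dist 1 (a * b) ≠ 1 := by
      intro hd
      exact hnR (dist_one_iff.mp hd)
    omega

/-! ### window machinery -/

lemma revPerm_inj {n i j i' j' : ℕ} (h1 : i < j) (h2 : j < n) (h3 : i' < j') (h4 : j' < n)
    (h : revPerm n i j = revPerm n i' j') : i = i' ∧ j = j' := by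
  have hv : ∀ t, t < n → rf n i j t = rf n i' j' t := fun t ht =>
    congrArg Fin.val (Equiv.ext_iff.mp h ⟨t, ht⟩)
  have e1 := hv i (by omega)
  have e2 := hv i' (by omega)
  have e3 := hv j (by omega)
  unfold rf at e1 e2 e3
  split_ifs at e1 e2 e3 <;> omega

lemma window_unique {n : ℕ} {σ τ : Equiv.Perm (Fin n)} (h : σ = τ)
    {m M m' M' : ℕ} (hM : M < n) (hM' : M' < n) (hm : m ≤ M) (hm' : m' ≤ M')
    (hfix : ∀ x : Fin n, x.val < m ∨ M < x.val → σ x = x)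
    (hfix' : ∀ x : Fin n, x.val < m' ∨ M' < x.val → τ x = x)
    (hmv1 : σ ⟨m, by omega⟩ ≠ ⟨m, by omega⟩)
    (hmv2 : σ ⟨M, hM⟩ ≠ ⟨M, hM⟩)
    (hmv1' : τ ⟨m', by omega⟩ ≠ ⟨m', by omega⟩)
    (hmv2' : τ ⟨M', hM'⟩ ≠ ⟨M', hM'⟩) : m = m' ∧ M = M' := by
  subst h
  constructor
  · by_contra hne
    rcases Nat.lt_or_ge m m' with hlt | hge
    · exact hmv1 (hfix' _ (Or.inl hlt))
    · have : m' < m := by omega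
      exact hmv1' (hfix _ (Or.inl this))
  · by_contra hne
    rcases Nat.lt_or_ge M M' with hlt | hge
    · exact hmv2' (hfix _ (Or.inr hlt))
    · have : M' < M := by omega
      exact hmv2 (hfix' _ (Or.inr this))

/-! ### family members: evaluation helpers -/

/-- generic: the product fixes everything outside `[m, M]` provided the two intervals
are inside `[m,M]`. -/
lemma fix_outside {n a b c d m M : ℕ} (hab : m ≤ a ∧ b ≤ M ∧ a ≤ b ∧ b < n)
    (hcd : m ≤ c ∧ d ≤ M ∧ c ≤ d ∧ d < n) :
    ∀ x : Fin n, x.val < m ∨ M < x.val → (revPerm n a b * revPerm n c d) x = x := by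
  intro x hx
  apply Fin.ext
  rw [prod_val]
  unfold rf
  split_ifs <;> omega

/-- value of a family member at a point, as an equation about `rf`. -/
lemma prod_eval {n a b c d t : ℕ} (ht : t < n) :
    ((revPerm n a b * revPerm n c d) ⟨t, ht⟩).val = rf n a b (rf n c d t) := prod_val _

lemma val_ne {n : ℕ} {σ : Equiv.Perm (Fin n)} {t : ℕ} (ht : t < n)
    (h : (σ ⟨t, ht⟩).val ≠ t) : σ ⟨t, ht⟩ ≠ ⟨t, ht⟩ := fun he => h (by rw [he])

/-! ### reversal structure lemmas -/

/-- a reversal is strictly decreasing on its moved points -/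
lemma reversal_antitone {n : ℕ} {σ : Equiv.Perm (Fin n)} (h : IsReversal σ)
    {x y : Fin n} (hxy : x.val < y.val) (hx : σ x ≠ x) (hy : σ y ≠ y) :
    (σ y).val < (σ x).val := by
  obtain ⟨i, j, hij, hin, hout⟩ := h
  have hxw : i ≤ x ∧ x ≤ j := by
    by_contra hc
    exact hx (hout x hc)
  have hyw : i ≤ y ∧ y ≤ j := by
    by_contra hc
    exact hy (hout y hc)
  have e1 := hin x hxw.1 hxw.2
  have e2 := hin y hyw.1 hyw.2
  rw [Fin.le_def] at hxw hyw
  omega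

/-- if a reversal maps `x` to `y > x` then every non-center point strictly between is moved -/
lemma reversal_interior_moved {n : ℕ} {σ : Equiv.Perm (Fin n)} (h : IsReversal σ)
    {x y z : Fin n} (hxy : (σ x).val = y.val) (h1 : x.val < y.val)
    (h2 : x.val < z.val) (h3 : z.val < y.val) (h4 : 2 * z.val ≠ x.val + y.val) :
    σ z ≠ z := by
  obtain ⟨i, j, hij, hin, hout⟩ := h
  have hxw : i ≤ x ∧ x ≤ j := by
    by_contra hc
    rw [hout x hc] at hxy
    omega
  have e1 := hin x hxw.1 hxw.2
  rw [Fin.le_def] at hxw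
  have hzw : i ≤ z ∧ z ≤ j := by
    rw [Fin.le_def, Fin.le_def]
    omega
  have e2 := hin z hzw.1 hzw.2
  intro hc
  rw [hc] at e2
  rw [Fin.le_def] at hzw
  omega

/-! ### family A soundness -/

section famA
variable {n i j k l : ℕ} (h1 : i < j) (h2 : j < k) (h3 : k < l) (h4 : l < n)

include h1 h2 h3 h4

lemma valA_i : ((revPerm n i j * revPerm n k l) ⟨i, by omega⟩).val = j := by
  rw [prod_eval]; unfold rf; split_ifs <;> omega

lemma valA_l : ((revPerm n i j * revPerm n k l) ⟨l, by omega⟩).val = k := by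
  rw [prod_eval]; unfold rf; split_ifs <;> omega

lemma valA_k : ((revPerm n i j * revPerm n k l) ⟨k, by omega⟩).val = l := by
  rw [prod_eval]; unfold rf; split_ifs <;> omega

lemma fixA : ∀ x : Fin n, x.val < i ∨ l < x.val → (revPerm n i j * revPerm n k l) x = x :=
  fix_outside ⟨by omega, by omega, by omega, by omega⟩ ⟨by omega, by omega, by omega, by omega⟩

lemma moveA_i : (revPerm n i j * revPerm n k l) ⟨i, by omega⟩ ≠ ⟨i, by omega⟩ :=
  val_ne _ (by rw [valA_i h1 h2 h3 h4]; omega)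

lemma moveA_l : (revPerm n i j * revPerm n k l) ⟨l, by omega⟩ ≠ ⟨l, by omega⟩ :=
  val_ne _ (by rw [valA_l h1 h2 h3 h4]; omega)

lemma notRev_A : ¬ IsReversal (revPerm n i j * revPerm n k l) := by
  intro h
  have hlt := reversal_antitone h (x := ⟨i, by omega⟩) (y := ⟨k, by omega⟩) (by simpa using by omega)
    (moveA_i h1 h2 h3 h4)
    (val_ne _ (by rw [valA_k h1 h2 h3 h4]; omega))
  rw [valA_i h1 h2 h3 h4, valA_k h1 h2 h3 h4] at hlt
  omega

end famA

/-! ### family B soundness -/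

section famB
variable {n w1 a b w2 : ℕ} (h1 : w1 ≤ a) (h2 : a < b) (h3 : b ≤ w2) (h4 : w2 < n)
  (h5 : ¬(w1 = a ∧ b = w2))

include h1 h2 h3 h4 h5

lemma moveB_w1 : (revPerm n w1 w2 * revPerm n a b) ⟨w1, by omega⟩ ≠ ⟨w1, by omega⟩ := by
  apply val_ne
  rw [prod_eval]; unfold rf; split_ifs <;> omega

lemma moveB_w2 : (revPerm n w1 w2 * revPerm n a b) ⟨w2, by omega⟩ ≠ ⟨w2, by omega⟩ := by
  apply val_ne
  rw [prod_eval]; unfold rf; split_ifs <;> omega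

lemma fixB : ∀ x : Fin n, x.val < w1 ∨ w2 < x.val → (revPerm n w1 w2 * revPerm n a b) x = x :=
  fix_outside ⟨by omega, by omega, by omega, by omega⟩ ⟨by omega, by omega, by omega, by omega⟩

lemma notRev_B : ¬ IsReversal (revPerm n w1 w2 * revPerm n a b) := by
  intro h
  by_cases hc : a + b = w1 + w2
  · -- centered block: σ fixes a, but interior lemma says it must move
    have hw1a : w1 < a := by omega
    have hbw2 : b < w2 := by omega
    have hx : ((revPerm n w1 w2 * revPerm n a b) ⟨w1, by omega⟩).val = w2 := by
      rw [prod_eval]; unfold rf; split_ifs <;> omega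
    have hz : ((revPerm n w1 w2 * revPerm n a b) ⟨a, by omega⟩).val = a := by
      rw [prod_eval]; unfold rf; split_ifs <;> omega
    have := reversal_interior_moved h (x := ⟨w1, by omega⟩) (y := ⟨w2, by omega⟩)
      (z := ⟨a, by omega⟩) hx (by simpa using by omega) (by simpa using by omega)
      (by simpa using by omega) (by simpa using by omega)
    exact this (Fin.ext hz)
  · -- non-centered: ascending moved pair a ↦ w1+w2-b < b ↦ w1+w2-a
    have hx : ((revPerm n w1 w2 * revPerm n a b) ⟨a, by omega⟩).val = w1 + w2 - b := by
      rw [prod_eval]; unfold rf; split_ifs <;> omega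
    have hy : ((revPerm n w1 w2 * revPerm n a b) ⟨b, by omega⟩).val = w1 + w2 - a := by
      rw [prod_eval]; unfold rf; split_ifs <;> omega
    have hlt := reversal_antitone h (x := ⟨a, by omega⟩) (y := ⟨b, by omega⟩)
      (by simpa using by omega)
      (val_ne _ (by rw [hx]; omega)) (val_ne _ (by rw [hy]; omega))
    rw [hx, hy] at hlt
    omega

end famB

/-! ### family C1 soundness -/

section famC1
variable {n i k j l : ℕ} (h1 : i < k) (h2 : k ≤ j) (h3 : j < l) (h4 : l < n)

include h1 h2 h3 h4

lemma valC1_i : ((revPerm n i j * revPerm n k l) ⟨i, by omega⟩).val = j := by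
  rw [prod_eval]; unfold rf; split_ifs <;> omega

lemma valC1_l : ((revPerm n i j * revPerm n k l) ⟨l, by omega⟩).val = i + j - k := by
  rw [prod_eval]; unfold rf; split_ifs <;> omega

lemma valC1_k : ((revPerm n i j * revPerm n k l) ⟨k, by omega⟩).val = l := by
  rw [prod_eval]; unfold rf; split_ifs <;> omega

lemma fixC1 : ∀ x : Fin n, x.val < i ∨ l < x.val → (revPerm n i j * revPerm n k l) x = x :=
  fix_outside ⟨by omega, by omega, by omega, by omega⟩ ⟨by omega, by omega, by omega, by omega⟩

lemma moveC1_i : (revPerm n i j * revPerm n k l) ⟨i, by omega⟩ ≠ ⟨i, by omega⟩ :=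
  val_ne _ (by rw [valC1_i h1 h2 h3 h4]; omega)

lemma moveC1_l : (revPerm n i j * revPerm n k l) ⟨l, by omega⟩ ≠ ⟨l, by omega⟩ :=
  val_ne _ (by rw [valC1_l h1 h2 h3 h4]; omega)

lemma notRev_C1 : ¬ IsReversal (revPerm n i j * revPerm n k l) := by
  intro h
  have hlt := reversal_antitone h (x := ⟨i, by omega⟩) (y := ⟨k, by omega⟩)
    (by simpa using by omega)
    (moveC1_i h1 h2 h3 h4) (val_ne _ (by rw [valC1_k h1 h2 h3 h4]; omega))
  rw [valC1_i h1 h2 h3 h4, valC1_k h1 h2 h3 h4] at hlt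
  omega

end famC1

/-! ### family C2 soundness -/

section famC2
variable {n i k j l : ℕ} (h1 : i < k) (h2 : k ≤ j) (h3 : j < l) (h4 : l < n)

include h1 h2 h3 h4

lemma valC2_i : ((revPerm n k l * revPerm n i j) ⟨i, by omega⟩).val = k + l - j := by
  rw [prod_eval]; unfold rf; split_ifs <;> omega

lemma valC2_l : ((revPerm n k l * revPerm n i j) ⟨l, by omega⟩).val = k := by
  rw [prod_eval]; unfold rf; split_ifs <;> omega

lemma fixC2 : ∀ x : Fin n, x.val < i ∨ l < x.val → (revPerm n k l * revPerm n i j) x = x :=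
  fix_outside ⟨by omega, by omega, by omega, by omega⟩ ⟨by omega, by omega, by omega, by omega⟩

lemma moveC2_i : (revPerm n k l * revPerm n i j) ⟨i, by omega⟩ ≠ ⟨i, by omega⟩ :=
  val_ne _ (by rw [valC2_i h1 h2 h3 h4]; omega)

lemma moveC2_l : (revPerm n k l * revPerm n i j) ⟨l, by omega⟩ ≠ ⟨l, by omega⟩ :=
  val_ne _ (by rw [valC2_l h1 h2 h3 h4]; omega)

lemma notRev_C2 : ¬ IsReversal (revPerm n k l * revPerm n i j) := by
  intro h
  rcases Nat.lt_or_ge k j with hkj | hkj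
  · -- j > k : ascending pair at i, i+1
    have hx := valC2_i h1 h2 h3 h4
    have hy : ((revPerm n k l * revPerm n i j) ⟨i+1, by omega⟩).val = k + l - j + 1 := by
      rw [prod_eval]; unfold rf; split_ifs <;> omega
    have hlt := reversal_antitone h (x := ⟨i, by omega⟩) (y := ⟨i+1, by omega⟩)
      (by simpa using by omega)
      (val_ne _ (by rw [hx]; omega)) (val_ne _ (by rw [hy]; omega))
    rw [hx, hy] at hlt
    omega
  · -- j = k
    have hjk : j = k := by omega
    -- pick moved x in (i, k]
    obtain ⟨x, hx1, hx2, hx3⟩ : ∃ x, i < x ∧ x ≤ k ∧ 2 * x ≠ i + k := by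
      by_cases hc : 2 * (i + 1) = i + k
      · exact ⟨i + 2, by omega, by omega, by omega⟩
      · exact ⟨i + 1, by omega, by omega, hc⟩
    obtain ⟨y, hy1, hy2, hy3⟩ : ∃ y, k < y ∧ y ≤ l ∧ 2 * y ≠ k + l := by
      by_cases hc : 2 * (k + 1) = k + l
      · exact ⟨k + 2, by omega, by omega, by omega⟩
      · exact ⟨k + 1, by omega, by omega, hc⟩
    have hvx : ((revPerm n k l * revPerm n i j) ⟨x, by omega⟩).val = i + k - x := by
      rw [prod_eval]; unfold rf; split_ifs <;> omega
    have hvy : ((revPerm n k l * revPerm n i j) ⟨y, by omega⟩).val = k + l - y := by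
      rw [prod_eval]; unfold rf; split_ifs <;> omega
    have hlt := reversal_antitone h (x := ⟨x, by omega⟩) (y := ⟨y, by omega⟩)
      (by simpa using by omega)
      (val_ne _ (by rw [hvx]; omega)) (val_ne _ (by rw [hvy]; omega))
    rw [hvx, hvy] at hlt
    omega

end famC2

set_option linter.unusedSectionVars false

/-! ### product identities -/

lemma perm_ext_rf {n a b c d a' b' c' d' : ℕ}
    (h : ∀ t, t < n → rf n a b (rf n c d t) = rf n a' b' (rf n c' d' t)) :
    revPerm n a b * revPerm n c d = revPerm n a' b' * revPerm n c' d' := by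
  apply Equiv.ext
  intro x
  apply Fin.ext
  rw [prod_val, prod_val]
  exact h x.val x.isLt

lemma id_comm_disjoint {n i j k l : ℕ} (h1 : k < l) (h2 : l < i) (h3 : i < j) (h4 : j < n) :
    revPerm n i j * revPerm n k l = revPerm n k l * revPerm n i j := by
  apply perm_ext_rf
  intro t ht
  unfold rf
  split_ifs <;> omega

lemma id_conj_nested {n i j k l : ℕ} (h1 : k ≤ i) (h2 : i < j) (h3 : j ≤ l) (h4 : l < n) :
    revPerm n i j * revPerm n k l = revPerm n k l * revPerm n (k + l - j) (k + l - i) := by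
  apply perm_ext_rf
  intro t ht
  unfold rf
  split_ifs <;> omega

lemma id_sh1 {n i : ℕ} (h : i + 2 < n) :
    revPerm n i (i+1) * revPerm n (i+1) (i+2) = revPerm n i (i+2) * revPerm n i (i+1) := by
  apply perm_ext_rf
  intro t ht
  unfold rf
  split_ifs <;> omega

lemma id_sh2 {n i : ℕ} (h : i + 2 < n) :
    revPerm n (i+1) (i+2) * revPerm n i (i+1) = revPerm n i (i+2) * revPerm n (i+1) (i+2) := by
  apply perm_ext_rf
  intro t ht
  unfold rf
  split_ifs <;> omega

lemma id_dbl {n i : ℕ} (h : i + 3 < n) :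
    revPerm n (i+1) (i+3) * revPerm n i (i+2) = revPerm n i (i+2) * revPerm n (i+1) (i+3) := by
  apply perm_ext_rf
  intro t ht
  unfold rf
  split_ifs <;> omega

/-! ### cross-family disjointness -/

lemma hval_of_eq {n a b c d a' b' c' d' : ℕ}
    (h : revPerm n a b * revPerm n c d = revPerm n a' b' * revPerm n c' d') :
    ∀ t, t < n → rf n a b (rf n c d t) = rf n a' b' (rf n c' d' t) := fun t ht =>
  congrArg Fin.val (Equiv.ext_iff.mp h ⟨t, ht⟩)

section cross

lemma notAB {n i j k l w1 a b w2 : ℕ}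
    (A1 : i < j) (A2 : j < k) (A3 : k < l) (A4 : l < n)
    (B1 : w1 ≤ a) (B2 : a < b) (B3 : b ≤ w2) (B4 : w2 < n) (B5 : ¬(w1 = a ∧ b = w2)) :
    revPerm n i j * revPerm n k l ≠ revPerm n w1 w2 * revPerm n a b := by
  intro heq
  obtain ⟨hw1, hw2⟩ := window_unique heq (m := i) (M := l) (m' := w1) (M' := w2)
    A4 B4 (by omega) (by omega)
    (fixA A1 A2 A3 A4) (fixB B1 B2 B3 B4 B5)
    (moveA_i A1 A2 A3 A4) (moveA_l A1 A2 A3 A4)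
    (moveB_w1 B1 B2 B3 B4 B5) (moveB_w2 B1 B2 B3 B4 B5)
  subst hw1 hw2
  have hval := hval_of_eq heq
  have e1 := hval i (by omega)
  have e2 := hval l (by omega)
  by_cases hwa : i < a
  · unfold rf at e1; split_ifs at e1 <;> omega
  · unfold rf at e2; split_ifs at e2 <;> omega

lemma notAC1 {n i j k l i' k' j' l' : ℕ}
    (A1 : i < j) (A2 : j < k) (A3 : k < l) (A4 : l < n)
    (C1 : i' < k') (C2 : k' ≤ j') (C3 : j' < l') (C4 : l' < n) :
    revPerm n i j * revPerm n k l ≠ revPerm n i' j' * revPerm n k' l' := by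
  intro heq
  obtain ⟨hw1, hw2⟩ := window_unique heq (m := i) (M := l) (m' := i') (M' := l')
    A4 C4 (by omega) (by omega)
    (fixA A1 A2 A3 A4) (fixC1 C1 C2 C3 C4)
    (moveA_i A1 A2 A3 A4) (moveA_l A1 A2 A3 A4)
    (moveC1_i C1 C2 C3 C4) (moveC1_l C1 C2 C3 C4)
  subst hw1 hw2
  have hval := hval_of_eq heq
  have e1 := hval i (by omega)
  have e2 := hval l (by omega)
  unfold rf at e1 e2
  split_ifs at e1 <;> split_ifs at e2 <;> omega

lemma notAC2 {n i j k l i' k' j' l' : ℕ}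
    (A1 : i < j) (A2 : j < k) (A3 : k < l) (A4 : l < n)
    (C1 : i' < k') (C2 : k' ≤ j') (C3 : j' < l') (C4 : l' < n) :
    revPerm n i j * revPerm n k l ≠ revPerm n k' l' * revPerm n i' j' := by
  intro heq
  obtain ⟨hw1, hw2⟩ := window_unique heq (m := i) (M := l) (m' := i') (M' := l')
    A4 C4 (by omega) (by omega)
    (fixA A1 A2 A3 A4) (fixC2 C1 C2 C3 C4)
    (moveA_i A1 A2 A3 A4) (moveA_l A1 A2 A3 A4)
    (moveC2_i C1 C2 C3 C4) (moveC2_l C1 C2 C3 C4)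
  subst hw1 hw2
  have hval := hval_of_eq heq
  have e1 := hval i (by omega)
  have e2 := hval l (by omega)
  unfold rf at e1 e2
  split_ifs at e1 <;> split_ifs at e2 <;> omega

lemma notBC1 {n w1 a b w2 i k j l : ℕ}
    (B1 : w1 ≤ a) (B2 : a < b) (B3 : b ≤ w2) (B4 : w2 < n) (B5 : ¬(w1 = a ∧ b = w2))
    (C1 : i < k) (C2 : k ≤ j) (C3 : j < l) (C4 : l < n)
    (Cx : ¬(k = i + 1 ∧ j = i + 1 ∧ l = i + 2)) :
    revPerm n w1 w2 * revPerm n a b ≠ revPerm n i j * revPerm n k l := by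
  intro heq
  obtain ⟨hw1, hw2⟩ := window_unique heq.symm (m := i) (M := l) (m' := w1) (M' := w2)
    C4 B4 (by omega) (by omega)
    (fixC1 C1 C2 C3 C4) (fixB B1 B2 B3 B4 B5)
    (moveC1_i C1 C2 C3 C4) (moveC1_l C1 C2 C3 C4)
    (moveB_w1 B1 B2 B3 B4 B5) (moveB_w2 B1 B2 B3 B4 B5)
  subst hw1 hw2
  have hval := hval_of_eq heq
  by_cases hwa : i < a
  · have e1 := hval i (by omega)
    unfold rf at e1; split_ifs at e1 <;> omega
  · -- w1 = a, so b < l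
    have hia : i = a := by omega
    have hbl : b < l := by
      rcases Nat.lt_or_ge b l with h | h
      · exact h
      · exact absurd ⟨hia, by omega⟩ B5
    -- σ(l) gives j = k
    have ejk : j = k := by
      have e2 := hval l (by omega)
      unfold rf at e2; split_ifs at e2 <;> omega
    -- σ(i) gives i + l - b = j
    have ej : i + l - b = j := by
      have e1 := hval i (by omega)
      unfold rf at e1; split_ifs at e1 <;> omega
    by_cases hk : k = i + 1
    · -- forces excluded parameters
      have e3 := hval (i+1) (by omega)
      have : b = i + 1 := by
        unfold rf at e3; split_ifs at e3 <;> omega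
      exact Cx ⟨hk, by omega, by omega⟩
    · have e3 := hval (i+1) (by omega)
      unfold rf at e3; split_ifs at e3 <;> omega

lemma notBC2 {n w1 a b w2 i k j l : ℕ}
    (B1 : w1 ≤ a) (B2 : a < b) (B3 : b ≤ w2) (B4 : w2 < n) (B5 : ¬(w1 = a ∧ b = w2))
    (C1 : i < k) (C2 : k ≤ j) (C3 : j < l) (C4 : l < n)
    (Cx : ¬(k = i + 1 ∧ j = i + 1 ∧ l = i + 2)) :
    revPerm n w1 w2 * revPerm n a b ≠ revPerm n k l * revPerm n i j := by
  intro heq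
  obtain ⟨hw1, hw2⟩ := window_unique heq.symm (m := i) (M := l) (m' := w1) (M' := w2)
    C4 B4 (by omega) (by omega)
    (fixC2 C1 C2 C3 C4) (fixB B1 B2 B3 B4 B5)
    (moveC2_i C1 C2 C3 C4) (moveC2_l C1 C2 C3 C4)
    (moveB_w1 B1 B2 B3 B4 B5) (moveB_w2 B1 B2 B3 B4 B5)
  subst hw1 hw2
  have hval := hval_of_eq heq
  by_cases hbw : b < l
  · have e1 := hval l (by omega)
    unfold rf at e1; split_ifs at e1 <;> omega
  · -- b = w2 = l, so i < a
    have hbl : b = l := by omega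
    have hia : i < a := by
      rcases Nat.lt_or_ge i a with h | h
      · exact h
      · exact absurd ⟨by omega, by omega⟩ B5
    -- σ(l): i + l - a = k
    have ek : i + l - a = k := by
      have e1 := hval l (by omega)
      unfold rf at e1; split_ifs at e1 <;> omega
    -- σ(i): k = j
    have ekj : k = j := by
      have e2 := hval i (by omega)
      unfold rf at e2; split_ifs at e2 <;> omega
    by_cases hl : l = j + 1
    · have e3 := hval (l-1) (by omega)
      have : k - 1 = i := by
        unfold rf at e3; split_ifs at e3 <;> omega
      exact Cx ⟨by omega, by omega, by omega⟩
    · have e3 := hval (l-1) (by omega)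
      unfold rf at e3; split_ifs at e3 <;> omega

lemma notC1C2 {n i k j l i' k' j' l' : ℕ}
    (C1 : i < k) (C2 : k ≤ j) (C3 : j < l) (C4 : l < n)
    (D1 : i' < k') (D2 : k' ≤ j') (D3 : j' < l') (D4 : l' < n)
    (Dx : ¬(k' = i' + 1 ∧ j' = i' + 2 ∧ l' = i' + 3)) :
    revPerm n i j * revPerm n k l ≠ revPerm n k' l' * revPerm n i' j' := by
  intro heq
  obtain ⟨hw1, hw2⟩ := window_unique heq (m := i) (M := l) (m' := i') (M' := l')
    C4 D4 (by omega) (by omega)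
    (fixC1 C1 C2 C3 C4) (fixC2 D1 D2 D3 D4)
    (moveC1_i C1 C2 C3 C4) (moveC1_l C1 C2 C3 C4)
    (moveC2_i D1 D2 D3 D4) (moveC2_l D1 D2 D3 D4)
  have hii : i = i' := hw1
  have hll : l = l' := hw2
  subst hii hll
  have hval := hval_of_eq heq
  -- σ(i) : j = k' + l - j', so k' < j'
  have ej : j = k' + l - j' := by
    have e1 := hval i (by omega)
    unfold rf at e1; split_ifs at e1 <;> omega
  have hkj' : k' < j' := by omega
  -- σ(l) : i + j - k = k'
  have ek : i + j - k = k' := by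
    have e2 := hval l (by omega)
    unfold rf at e2; split_ifs at e2 <;> omega
  by_cases hk : k = i + 1
  · -- σ(i+1): LHS l, RHS j+1 → l = j + 1
    have el : l = j + 1 := by
      have e3 := hval (i+1) (by omega)
      unfold rf at e3; split_ifs at e3 <;> omega
    -- σ(i+2): LHS i, RHS j' - 2 → j' = i + 2, k' = i+1, forces excluded params
    have e4 := hval (i+2) (by omega)
    have : j' = i + 2 := by
      unfold rf at e4; split_ifs at e4 <;> omega
    exact Dx ⟨by omega, by omega, by omega⟩
  · have e3 := hval (i+1) (by omega)
    unfold rf at e3; split_ifs at e3 <;> omega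

end cross

/-! ### within-family injectivity -/

lemma injA {n i j k l i' j' k' l' : ℕ}
    (A1 : i < j) (A2 : j < k) (A3 : k < l) (A4 : l < n)
    (B1 : i' < j') (B2 : j' < k') (B3 : k' < l') (B4 : l' < n)
    (heq : revPerm n i j * revPerm n k l = revPerm n i' j' * revPerm n k' l') :
    i = i' ∧ j = j' ∧ k = k' ∧ l = l' := by
  obtain ⟨hw1, hw2⟩ := window_unique heq (m := i) (M := l) (m' := i') (M' := l')
    A4 B4 (by omega) (by omega)
    (fixA A1 A2 A3 A4) (fixA B1 B2 B3 B4)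
    (moveA_i A1 A2 A3 A4) (moveA_l A1 A2 A3 A4)
    (moveA_i B1 B2 B3 B4) (moveA_l B1 B2 B3 B4)
  subst hw1 hw2
  have hval := hval_of_eq heq
  have e1 := hval i (by omega)
  have hj : j = j' := by unfold rf at e1; split_ifs at e1 <;> omega
  subst hj
  have hkl := mul_left_cancel heq
  have := revPerm_inj (by omega) (by omega) (by omega) (by omega) hkl
  omega

lemma injB {n w1 a b w2 a' b' : ℕ}
    (B1 : w1 ≤ a) (B2 : a < b) (B3 : b ≤ w2) (B4 : w2 < n) (B5 : ¬(w1 = a ∧ b = w2))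
    (B1' : w1 ≤ a') (B2' : a' < b') (B3' : b' ≤ w2)
    (heq : revPerm n w1 w2 * revPerm n a b = revPerm n w1 w2 * revPerm n a' b') :
    a = a' ∧ b = b' := by
  have hab := mul_left_cancel heq
  exact revPerm_inj (by omega) (by omega) (by omega) (by omega) hab

lemma injB_window {n w1 a b w2 w1' a' b' w2' : ℕ}
    (B1 : w1 ≤ a) (B2 : a < b) (B3 : b ≤ w2) (B4 : w2 < n) (B5 : ¬(w1 = a ∧ b = w2))
    (B1' : w1' ≤ a') (B2' : a' < b') (B3' : b' ≤ w2') (B4' : w2' < n) (B5' : ¬(w1' = a' ∧ b' = w2'))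
    (heq : revPerm n w1 w2 * revPerm n a b = revPerm n w1' w2' * revPerm n a' b') :
    w1 = w1' ∧ a = a' ∧ b = b' ∧ w2 = w2' := by
  obtain ⟨hw1, hw2⟩ := window_unique heq (m := w1) (M := w2) (m' := w1') (M' := w2')
    B4 B4' (by omega) (by omega)
    (fixB B1 B2 B3 B4 B5) (fixB B1' B2' B3' B4' B5')
    (moveB_w1 B1 B2 B3 B4 B5) (moveB_w2 B1 B2 B3 B4 B5)
    (moveB_w1 B1' B2' B3' B4' B5') (moveB_w2 B1' B2' B3' B4' B5')
  subst hw1 hw2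
  obtain ⟨h1, h2⟩ := injB B1 B2 B3 B4 B5 B1' B2' B3' heq
  exact ⟨rfl, h1, h2, rfl⟩

lemma injC1 {n i k j l i' k' j' l' : ℕ}
    (C1 : i < k) (C2 : k ≤ j) (C3 : j < l) (C4 : l < n)
    (D1 : i' < k') (D2 : k' ≤ j') (D3 : j' < l') (D4 : l' < n)
    (heq : revPerm n i j * revPerm n k l = revPerm n i' j' * revPerm n k' l') :
    i = i' ∧ k = k' ∧ j = j' ∧ l = l' := by
  obtain ⟨hw1, hw2⟩ := window_unique heq (m := i) (M := l) (m' := i') (M' := l')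
    C4 D4 (by omega) (by omega)
    (fixC1 C1 C2 C3 C4) (fixC1 D1 D2 D3 D4)
    (moveC1_i C1 C2 C3 C4) (moveC1_l C1 C2 C3 C4)
    (moveC1_i D1 D2 D3 D4) (moveC1_l D1 D2 D3 D4)
  subst hw1 hw2
  have hval := hval_of_eq heq
  have e1 := hval i (by omega)
  have hj : j = j' := by unfold rf at e1; split_ifs at e1 <;> omega
  subst hj
  have hkl := mul_left_cancel heq
  have := revPerm_inj (by omega) (by omega) (by omega) (by omega) hkl
  omega

lemma injC2 {n i k j l i' k' j' l' : ℕ}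
    (C1 : i < k) (C2 : k ≤ j) (C3 : j < l) (C4 : l < n)
    (D1 : i' < k') (D2 : k' ≤ j') (D3 : j' < l') (D4 : l' < n)
    (heq : revPerm n k l * revPerm n i j = revPerm n k' l' * revPerm n i' j') :
    i = i' ∧ k = k' ∧ j = j' ∧ l = l' := by
  obtain ⟨hw1, hw2⟩ := window_unique heq (m := i) (M := l) (m' := i') (M' := l')
    C4 D4 (by omega) (by omega)
    (fixC2 C1 C2 C3 C4) (fixC2 D1 D2 D3 D4)
    (moveC2_i C1 C2 C3 C4) (moveC2_l C1 C2 C3 C4)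
    (moveC2_i D1 D2 D3 D4) (moveC2_l D1 D2 D3 D4)
  subst hw1 hw2
  have hval := hval_of_eq heq
  have e1 := hval l (by omega)
  have hk : k = k' := by unfold rf at e1; split_ifs at e1 <;> omega
  subst hk
  have hval2 := hval i (by omega)
  have hj : j = j' := by unfold rf at hval2; split_ifs at hval2 <;> omega
  exact ⟨rfl, rfl, hj, rfl⟩



open Finset

abbrev Quad := ℕ × ℕ × ℕ × ℕ

def quads (n : ℕ) (P : Quad → Prop) [DecidablePred P] : Finset Quad :=
  (range n ×ˢ range n ×ˢ range n ×ˢ range n).filter P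

lemma mem_quads {n : ℕ} {P : Quad → Prop} [DecidablePred P] {a b c d : ℕ} :
    (a,b,c,d) ∈ quads n P ↔ a < n ∧ b < n ∧ c < n ∧ d < n ∧ P (a,b,c,d) := by
  simp only [quads, mem_filter, mem_product, mem_range]
  tauto

def P4 (n : ℕ) : Finset Quad := quads n (fun p => p.1 < p.2.1 ∧ p.2.1 < p.2.2.1 ∧ p.2.2.1 < p.2.2.2)
def P3 (n : ℕ) : Finset Quad := quads n (fun p => p.1 < p.2.1 ∧ p.2.1 = p.2.2.1 ∧ p.2.2.1 < p.2.2.2)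
def P2' (n : ℕ) : Finset Quad := quads n (fun p => p.1 < p.2.1 ∧ p.2.1 = p.2.2.1 ∧ p.2.2.1 = p.2.2.2)

lemma mem_P4 {n : ℕ} {a b c d : ℕ} : (a,b,c,d) ∈ P4 n ↔ a < b ∧ b < c ∧ c < d ∧ d < n := by
  rw [P4, mem_quads]; dsimp only; omega
lemma mem_P3 {n : ℕ} {a b c d : ℕ} : (a,b,c,d) ∈ P3 n ↔ a < b ∧ b = c ∧ c < d ∧ d < n := by
  rw [P3, mem_quads]; dsimp only; omega
lemma mem_P2' {n : ℕ} {a b c d : ℕ} : (a,b,c,d) ∈ P2' n ↔ a < b ∧ b = c ∧ c = d ∧ d < n := by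
  rw [P2', mem_quads]; dsimp only; omega

lemma card_P2' (n : ℕ) : (P2' n).card * 2 = n * (n - 1) := by
  induction n with
  | zero => simp [P2', quads]
  | succ m ih =>
    have hsplit : P2' (m+1) = P2' m ∪ (range m).image (fun i => (i, m, m, m)) := by
      ext ⟨a, b, c, d⟩
      simp only [mem_union, mem_image, mem_range, mem_P2', Prod.mk.injEq]
      constructor
      · rintro ⟨h1, h2, h3, h4⟩
        by_cases hd : d = m
        · right; exact ⟨a, by omega, rfl, by omega, by omega, by omega⟩
        · left; omega
      · rintro (⟨h1, h2, h3, h4⟩ | ⟨i, hi, rfl, rfl, rfl, rfl⟩)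
        · exact ⟨h1, h2, h3, by omega⟩
        · exact ⟨hi, rfl, rfl, by omega⟩
    have hdisj : Disjoint (P2' m) ((range m).image (fun i => (i, m, m, m))) := by
      rw [disjoint_left]
      rintro ⟨a, b, c, d⟩ h1 h2
      rw [mem_P2'] at h1
      simp only [mem_image, mem_range, Prod.mk.injEq] at h2
      omega
    have hinj : ((range m).image (fun i => (i, m, m, m))).card = m := by
      rw [card_image_of_injective _ (fun x y h => by
        simpa using congrArg Prod.fst h), card_range]
    rw [hsplit, card_union_of_disjoint hdisj, hinj]
    cases m with
    | zero => simp [P2', quads]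
    | succ k =>
      rw [add_mul, ih]
      simp only [Nat.add_sub_cancel, Nat.succ_sub_one]
      ring

lemma card_P3 (n : ℕ) : (P3 n).card * 6 = n * (n - 1) * (n - 2) := by
  induction n with
  | zero => simp [P3, quads]
  | succ m ih =>
    have hsplit : P3 (m+1) = P3 m ∪ (P2' m).image (fun p => (p.1, p.2.1, p.2.2.1, m)) := by
      ext ⟨a, b, c, d⟩
      simp only [mem_union, mem_image, mem_P3, Prod.mk.injEq]
      constructor
      · rintro ⟨h1, h2, h3, h4⟩
        by_cases hd : d = m
        · right
          exact ⟨(a, b, c, c), by rw [mem_P2']; omega, rfl, rfl, rfl, by omega⟩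
        · left; omega
      · rintro (⟨h1, h2, h3, h4⟩ | ⟨⟨x, y, z, w⟩, hp, rfl, rfl, rfl, rfl⟩)
        · exact ⟨h1, h2, h3, by omega⟩
        · rw [mem_P2'] at hp; dsimp only; omega
    have hdisj : Disjoint (P3 m) ((P2' m).image (fun p => (p.1, p.2.1, p.2.2.1, m))) := by
      rw [disjoint_left]
      rintro ⟨a, b, c, d⟩ h1 h2
      rw [mem_P3] at h1
      obtain ⟨⟨x, y, z, w⟩, hp, heq⟩ := mem_image.mp h2
      rw [mem_P2'] at hp
      simp only [Prod.mk.injEq] at heq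
      omega
    have hinj : ((P2' m).image (fun p => (p.1, p.2.1, p.2.2.1, m))).card = (P2' m).card := by
      apply card_image_of_injOn
      rintro ⟨a, b, c, d⟩ h1 ⟨a', b', c', d'⟩ h2 h
      rw [Finset.mem_coe, mem_P2'] at h1
      rw [Finset.mem_coe, mem_P2'] at h2
      simp only [Prod.mk.injEq] at h
      simp only [Prod.mk.injEq]
      omega
    rw [hsplit, card_union_of_disjoint hdisj, hinj]
    have h2 := card_P2' m
    rcases Nat.lt_or_ge m 2 with hm | hm
    · interval_cases m
      · have e1 : P3 0 = ∅ := by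
          ext ⟨a, b, c, d⟩; rw [mem_P3]; simp
        have e2 : P2' 0 = ∅ := by
          ext ⟨a, b, c, d⟩; rw [mem_P2']; simp
        simp [e1, e2]
      · have e1 : (P3 1).card = 0 := by
          rw [Finset.card_eq_zero]; ext ⟨a, b, c, d⟩; rw [mem_P3]; simp; omega
        have e2 : (P2' 1).card = 0 := by
          rw [Finset.card_eq_zero]; ext ⟨a, b, c, d⟩; rw [mem_P2']; simp; omega
        simp [e1, e2]
    · obtain ⟨r, rfl⟩ : ∃ r, m = r + 2 := ⟨m - 2, by omega⟩
      have hs1 : r + 2 - 1 = r + 1 := by omega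
      have hs2 : r + 2 - 2 = r := by omega
      have hs3 : r + 2 + 1 - 1 = r + 2 := by omega
      have hs4 : r + 2 + 1 - 2 = r + 1 := by omega
      simp only [hs1, hs2] at ih h2
      rw [hs3, hs4]
      zify at ih h2 ⊢
      linear_combination ih + 3 * h2

lemma card_P4 (n : ℕ) : (P4 n).card * 24 = n * (n - 1) * (n - 2) * (n - 3) := by
  induction n with
  | zero => simp [P4, quads]
  | succ m ih =>
    have hsplit : P4 (m+1) = P4 m ∪ (P3 m).image (fun p => (p.1, p.2.1, p.2.2.2, m)) := by
      ext ⟨a, b, c, d⟩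
      simp only [mem_union, mem_image, mem_P4, Prod.mk.injEq]
      constructor
      · rintro ⟨h1, h2, h3, h4⟩
        by_cases hd : d = m
        · right
          exact ⟨(a, b, b, c), by rw [mem_P3]; omega, rfl, rfl, rfl, by omega⟩
        · left; omega
      · rintro (⟨h1, h2, h3, h4⟩ | ⟨⟨x, y, z, w⟩, hp, rfl, rfl, rfl, rfl⟩)
        · exact ⟨h1, h2, h3, by omega⟩
        · rw [mem_P3] at hp; dsimp only; omega
    have hdisj : Disjoint (P4 m) ((P3 m).image (fun p => (p.1, p.2.1, p.2.2.2, m))) := by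
      rw [disjoint_left]
      rintro ⟨a, b, c, d⟩ h1 h2
      rw [mem_P4] at h1
      obtain ⟨⟨x, y, z, w⟩, hp, heq⟩ := mem_image.mp h2
      rw [mem_P3] at hp
      simp only [Prod.mk.injEq] at heq
      omega
    have hinj : ((P3 m).image (fun p => (p.1, p.2.1, p.2.2.2, m))).card = (P3 m).card := by
      apply card_image_of_injOn
      rintro ⟨a, b, c, d⟩ h1 ⟨a', b', c', d'⟩ h2 h
      rw [Finset.mem_coe, mem_P3] at h1
      rw [Finset.mem_coe, mem_P3] at h2
      simp only [Prod.mk.injEq] at h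
      simp only [Prod.mk.injEq]
      omega
    rw [hsplit, card_union_of_disjoint hdisj, hinj]
    have h3 := card_P3 m
    rcases Nat.lt_or_ge m 3 with hm | hm
    · have e1 : (P4 m).card = 0 := by
        rw [Finset.card_eq_zero]; ext ⟨a, b, c, d⟩; rw [mem_P4]; simp; omega
      have e2 : (P3 m).card = 0 := by
        rw [Finset.card_eq_zero]; ext ⟨a, b, c, d⟩; rw [mem_P3]; simp; omega
      rw [e1, e2]
      interval_cases m <;> simp
    · obtain ⟨r, rfl⟩ : ∃ r, m = r + 3 := ⟨m - 3, by omega⟩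
      have hs1 : r + 3 - 1 = r + 2 := by omega
      have hs2 : r + 3 - 2 = r + 1 := by omega
      have hs3 : r + 3 - 3 = r := by omega
      have hs4 : r + 3 + 1 - 1 = r + 3 := by omega
      have hs5 : r + 3 + 1 - 2 = r + 2 := by omega
      have hs6 : r + 3 + 1 - 3 = r + 1 := by omega
      simp only [hs1, hs2, hs3] at ih h3
      simp only [hs4, hs5, hs6]
      zify at ih h3 ⊢
      linear_combination ih + 4 * h3

/-- parameters for family A : `(i,j,k,l)`, `i<j<k<l<n` -/
def PA (n : ℕ) : Finset Quad := P4 n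

/-- parameters for family B : `(w1,a,b,w2)`, `w1≤a<b≤w2<n`, not both equalities -/
def PB (n : ℕ) : Finset Quad :=
  quads n (fun p => p.1 ≤ p.2.1 ∧ p.2.1 < p.2.2.1 ∧ p.2.2.1 ≤ p.2.2.2 ∧
    ¬(p.1 = p.2.1 ∧ p.2.2.1 = p.2.2.2))

lemma mem_PB {n : ℕ} {a b c d : ℕ} :
    (a,b,c,d) ∈ PB n ↔ a ≤ b ∧ b < c ∧ c ≤ d ∧ d < n ∧ ¬(a = b ∧ c = d) := by
  rw [PB, mem_quads]; dsimp only; omega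

/-- parameters for family C1 : `(i,k,j,l)`, `i<k≤j<l<n`, excluding `(i,i+1,i+1,i+2)` -/
def PC1 (n : ℕ) : Finset Quad :=
  quads n (fun p => p.1 < p.2.1 ∧ p.2.1 ≤ p.2.2.1 ∧ p.2.2.1 < p.2.2.2 ∧
    ¬(p.2.1 = p.1 + 1 ∧ p.2.2.1 = p.1 + 1 ∧ p.2.2.2 = p.1 + 2))

lemma mem_PC1 {n : ℕ} {a b c d : ℕ} :
    (a,b,c,d) ∈ PC1 n ↔ a < b ∧ b ≤ c ∧ c < d ∧ d < n ∧
      ¬(b = a + 1 ∧ c = a + 1 ∧ d = a + 2) := by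
  rw [PC1, mem_quads]; dsimp only; omega

/-- parameters for family C2 : as C1, also excluding `(i,i+1,i+2,i+3)` -/
def PC2 (n : ℕ) : Finset Quad :=
  quads n (fun p => p.1 < p.2.1 ∧ p.2.1 ≤ p.2.2.1 ∧ p.2.2.1 < p.2.2.2 ∧
    ¬(p.2.1 = p.1 + 1 ∧ p.2.2.1 = p.1 + 1 ∧ p.2.2.2 = p.1 + 2) ∧
    ¬(p.2.1 = p.1 + 1 ∧ p.2.2.1 = p.1 + 2 ∧ p.2.2.2 = p.1 + 3))

lemma mem_PC2 {n : ℕ} {a b c d : ℕ} :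
    (a,b,c,d) ∈ PC2 n ↔ a < b ∧ b ≤ c ∧ c < d ∧ d < n ∧
      ¬(b = a + 1 ∧ c = a + 1 ∧ d = a + 2) ∧ ¬(b = a + 1 ∧ c = a + 2 ∧ d = a + 3) := by
  rw [PC2, mem_quads]; dsimp only; omega

lemma card_PB (n : ℕ) : (PB n).card = (P4 n).card + 2 * (P3 n).card := by
  have h1 : PB n = P4 n ∪ ((P3 n).image (fun p => (p.1, p.1, p.2.1, p.2.2.2)) ∪
      (P3 n).image (fun p => (p.1, p.2.1, p.2.2.2, p.2.2.2))) := by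
    ext ⟨a, b, c, d⟩
    simp only [mem_union, mem_image, mem_PB, mem_P4]
    constructor
    · rintro ⟨h1, h2, h3, h4, h5⟩
      rcases Nat.lt_or_ge a b with hab | hab
      · rcases Nat.lt_or_ge c d with hcd | hcd
        · left; exact ⟨hab, h2, hcd, h4⟩
        · right; right
          exact ⟨(a, b, b, c), by rw [mem_P3]; omega, by simp; omega⟩
      · right; left
        exact ⟨(b, c, c, d), by rw [mem_P3]; omega, by simp; omega⟩
    · rintro (⟨h1, h2, h3, h4⟩ | ⟨⟨x,y,z,w⟩, hp, heq⟩ | ⟨⟨x,y,z,w⟩, hp, heq⟩) <;>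
        [skip; rw [mem_P3] at hp; rw [mem_P3] at hp] <;>
        [omega; (simp only [Prod.mk.injEq] at heq; omega);
          (simp only [Prod.mk.injEq] at heq; omega)]
  have c1 : ((P3 n).image (fun p : Quad => (p.1, p.1, p.2.1, p.2.2.2))).card = (P3 n).card := by
    apply card_image_of_injOn
    rintro ⟨a,b,c,d⟩ h1 ⟨a',b',c',d'⟩ h2 h
    rw [Finset.mem_coe, mem_P3] at h1 h2
    simp only [Prod.mk.injEq] at h ⊢
    omega
  have c2 : ((P3 n).image (fun p : Quad => (p.1, p.2.1, p.2.2.2, p.2.2.2))).card = (P3 n).card := by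
    apply card_image_of_injOn
    rintro ⟨a,b,c,d⟩ h1 ⟨a',b',c',d'⟩ h2 h
    rw [Finset.mem_coe, mem_P3] at h1 h2
    simp only [Prod.mk.injEq] at h ⊢
    omega
  have d1 : Disjoint ((P3 n).image (fun p : Quad => (p.1, p.1, p.2.1, p.2.2.2)))
      ((P3 n).image (fun p : Quad => (p.1, p.2.1, p.2.2.2, p.2.2.2))) := by
    rw [disjoint_left]
    rintro ⟨a,b,c,d⟩ h1 h2
    obtain ⟨⟨x,y,z,w⟩, hp, heq⟩ := mem_image.mp h1
    obtain ⟨⟨x',y',z',w'⟩, hp', heq'⟩ := mem_image.mp h2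
    rw [mem_P3] at hp hp'
    simp only [Prod.mk.injEq] at heq heq'
    omega
  have d2 : Disjoint (P4 n) ((P3 n).image (fun p : Quad => (p.1, p.1, p.2.1, p.2.2.2)) ∪
      (P3 n).image (fun p : Quad => (p.1, p.2.1, p.2.2.2, p.2.2.2))) := by
    rw [disjoint_left]
    rintro ⟨a,b,c,d⟩ h1 h2
    rw [mem_P4] at h1
    rcases mem_union.mp h2 with h2 | h2 <;>
      · obtain ⟨⟨x,y,z,w⟩, hp, heq⟩ := mem_image.mp h2
        rw [mem_P3] at hp
        simp only [Prod.mk.injEq] at heq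
        omega
  rw [h1, card_union_of_disjoint d2, card_union_of_disjoint d1, c1, c2]
  ring

lemma card_PC1 (n : ℕ) (hn : 2 ≤ n) :
    (PC1 n).card + (n - 2) = (P4 n).card + (P3 n).card := by
  have h1 : PC1 n ∪ (range (n-2)).image (fun i => (i, i+1, i+1, i+2)) = P4 n ∪ P3 n := by
    ext ⟨a, b, c, d⟩
    simp only [mem_union, mem_image, mem_PC1, mem_P4, mem_P3, mem_range]
    constructor
    · rintro (⟨h1, h2, h3, h4, h5⟩ | ⟨i, hi, heq⟩)
      · omega
      · simp only [Prod.mk.injEq] at heq; omega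
    · rintro (⟨h1, h2, h3, h4⟩ | ⟨h1, h2, h3, h4⟩)
      · left; omega
      · by_cases hx : b = a + 1 ∧ c = a + 1 ∧ d = a + 2
        · obtain ⟨e1, e2, e3⟩ := hx
          subst e1 e2 e3
          right
          exact ⟨a, by omega, rfl⟩
        · left; omega
  have hd : Disjoint (PC1 n) ((range (n-2)).image (fun i => (i, i+1, i+1, i+2))) := by
    rw [disjoint_left]
    rintro ⟨a,b,c,d⟩ h1 h2
    rw [mem_PC1] at h1
    obtain ⟨i, hi, heq⟩ := mem_image.mp h2
    simp only [mem_range] at hi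
    simp only [Prod.mk.injEq] at heq
    omega
  have hd2 : Disjoint (P4 n) (P3 n) := by
    rw [disjoint_left]
    rintro ⟨a,b,c,d⟩ h1 h2
    rw [mem_P4] at h1; rw [mem_P3] at h2; omega
  have hc : ((range (n-2)).image (fun i => (i, i+1, i+1, i+2))).card = n - 2 := by
    rw [card_image_of_injective _ (fun x y h => by simpa using congrArg Prod.fst h), card_range]
  calc (PC1 n).card + (n-2)
      = (PC1 n ∪ (range (n-2)).image (fun i => (i, i+1, i+1, i+2))).card := by
        rw [card_union_of_disjoint hd, hc]
    _ = (P4 n ∪ P3 n).card := by rw [h1]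
    _ = (P4 n).card + (P3 n).card := card_union_of_disjoint hd2

lemma card_PC2 (n : ℕ) (hn : 3 ≤ n) :
    (PC2 n).card + (n - 2) + (n - 3) = (P4 n).card + (P3 n).card := by
  have h1 : PC2 n ∪ ((range (n-2)).image (fun i => (i, i+1, i+1, i+2)) ∪
      (range (n-3)).image (fun i => (i, i+1, i+2, i+3))) = P4 n ∪ P3 n := by
    ext ⟨a, b, c, d⟩
    simp only [mem_union, mem_image, mem_PC2, mem_P4, mem_P3, mem_range]
    constructor
    · rintro (⟨h1, h2, h3, h4, h5⟩ | ⟨i, hi, heq⟩ | ⟨i, hi, heq⟩) <;>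
        first
        | omega
        | (simp only [Prod.mk.injEq] at heq; omega)
    · rintro (⟨h1, h2, h3, h4⟩ | ⟨h1, h2, h3, h4⟩)
      · by_cases hx : b = a + 1 ∧ c = a + 2 ∧ d = a + 3
        · obtain ⟨e1, e2, e3⟩ := hx
          subst e1 e2 e3
          right; right
          exact ⟨a, by omega, rfl⟩
        · left; omega
      · by_cases hx : b = a + 1 ∧ c = a + 1 ∧ d = a + 2
        · obtain ⟨e1, e2, e3⟩ := hx
          subst e1 e2 e3
          right; left
          exact ⟨a, by omega, rfl⟩
        · left; omega
  have hdi : Disjoint ((range (n-2)).image (fun i => (i, i+1, i+1, i+2)))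
      ((range (n-3)).image (fun i => (i, i+1, i+2, i+3))) := by
    rw [disjoint_left]
    rintro ⟨a,b,c,d⟩ h1 h2
    obtain ⟨i, hi, heq⟩ := mem_image.mp h1
    obtain ⟨i', hi', heq'⟩ := mem_image.mp h2
    simp only [Prod.mk.injEq] at heq heq'
    omega
  have hd : Disjoint (PC2 n) ((range (n-2)).image (fun i => (i, i+1, i+1, i+2)) ∪
      (range (n-3)).image (fun i => (i, i+1, i+2, i+3))) := by
    rw [disjoint_left]
    rintro ⟨a,b,c,d⟩ h1 h2
    rw [mem_PC2] at h1
    rcases mem_union.mp h2 with h2 | h2 <;>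
      · obtain ⟨i, hi, heq⟩ := mem_image.mp h2
        simp only [mem_range] at hi
        simp only [Prod.mk.injEq] at heq
        omega
  have hd2 : Disjoint (P4 n) (P3 n) := by
    rw [disjoint_left]
    rintro ⟨a,b,c,d⟩ h1 h2
    rw [mem_P4] at h1; rw [mem_P3] at h2; omega
  have hc1 : ((range (n-2)).image (fun i => (i, i+1, i+1, i+2))).card = n - 2 := by
    rw [card_image_of_injective _ (fun x y h => by simpa using congrArg Prod.fst h), card_range]
  have hc2 : ((range (n-3)).image (fun i => (i, i+1, i+2, i+3))).card = n - 3 := by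
    rw [card_image_of_injective _ (fun x y h => by simpa using congrArg Prod.fst h), card_range]
  calc (PC2 n).card + (n-2) + (n-3)
      = (PC2 n ∪ ((range (n-2)).image (fun i => (i, i+1, i+1, i+2)) ∪
          (range (n-3)).image (fun i => (i, i+1, i+2, i+3)))).card := by
        rw [card_union_of_disjoint hd, card_union_of_disjoint hdi, hc1, hc2]; ring
    _ = (P4 n ∪ P3 n).card := by rw [h1]
    _ = (P4 n).card + (P3 n).card := card_union_of_disjoint hd2

/-! ### the master family map -/

open Finset

def famPerm (n : ℕ) (q : ℕ × Quad) : Equiv.Perm (Fin n) :=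
  if q.1 = 0 then revPerm n q.2.1 q.2.2.1 * revPerm n q.2.2.2.1 q.2.2.2.2
  else if q.1 = 1 then revPerm n q.2.1 q.2.2.2.2 * revPerm n q.2.2.1 q.2.2.2.1
  else if q.1 = 2 then revPerm n q.2.1 q.2.2.2.1 * revPerm n q.2.2.1 q.2.2.2.2
  else revPerm n q.2.2.1 q.2.2.2.2 * revPerm n q.2.1 q.2.2.2.1

lemma famPerm_0 {n : ℕ} {p : Quad} :
    famPerm n (0, p) = revPerm n p.1 p.2.1 * revPerm n p.2.2.1 p.2.2.2 := rfl
lemma famPerm_1 {n : ℕ} {p : Quad} :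
    famPerm n (1, p) = revPerm n p.1 p.2.2.2 * revPerm n p.2.1 p.2.2.1 := rfl
lemma famPerm_2 {n : ℕ} {p : Quad} :
    famPerm n (2, p) = revPerm n p.1 p.2.2.1 * revPerm n p.2.1 p.2.2.2 := rfl
lemma famPerm_3 {n : ℕ} {p : Quad} :
    famPerm n (3, p) = revPerm n p.2.1 p.2.2.2 * revPerm n p.1 p.2.2.1 := rfl

def PAll (n : ℕ) : Finset (ℕ × Quad) :=
  (PA n).image (fun p => (0, p)) ∪ (PB n).image (fun p => (1, p)) ∪
  (PC1 n).image (fun p => (2, p)) ∪ (PC2 n).image (fun p => (3, p))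

lemma mem_PAll {n : ℕ} {q : ℕ × Quad} :
    q ∈ PAll n ↔ (q.1 = 0 ∧ q.2 ∈ PA n) ∨ (q.1 = 1 ∧ q.2 ∈ PB n) ∨
      (q.1 = 2 ∧ q.2 ∈ PC1 n) ∨ (q.1 = 3 ∧ q.2 ∈ PC2 n) := by
  obtain ⟨t, p⟩ := q
  simp only [PAll, mem_union, mem_image, Prod.mk.injEq]
  constructor
  · rintro (((⟨x, hx, h1, h2⟩ | ⟨x, hx, h1, h2⟩) | ⟨x, hx, h1, h2⟩) | ⟨x, hx, h1, h2⟩) <;>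
      subst h1 <;> subst h2 <;> tauto
  · rintro (⟨h1, h2⟩ | ⟨h1, h2⟩ | ⟨h1, h2⟩ | ⟨h1, h2⟩) <;> subst h1
    · exact Or.inl (Or.inl (Or.inl ⟨p, h2, rfl, rfl⟩))
    · exact Or.inl (Or.inl (Or.inr ⟨p, h2, rfl, rfl⟩))
    · exact Or.inl (Or.inr ⟨p, h2, rfl, rfl⟩)
    · exact Or.inr ⟨p, h2, rfl, rfl⟩

lemma card_PAll {n : ℕ} :
    (PAll n).card = (PA n).card + (PB n).card + (PC1 n).card + (PC2 n).card := by
  have h1 : ∀ (t : ℕ) (s : Finset Quad), ((s.image (fun p => (t, p))).card = s.card) :=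
    fun t s => card_image_of_injective _ (fun x y h => by simpa using congrArg Prod.snd h)
  have d : ∀ (t t' : ℕ) (s s' : Finset Quad), t ≠ t' →
      Disjoint (s.image (fun p => (t, p))) (s'.image (fun p => (t', p))) := by
    intro t t' s s' hne
    rw [disjoint_left]
    rintro q h1 h2
    obtain ⟨x, hx, rfl⟩ := mem_image.mp h1
    obtain ⟨y, hy, heq⟩ := mem_image.mp h2
    exact hne (by simpa using (congrArg Prod.fst heq).symm)
  have dis1 : Disjoint ((PA n).image (fun p => (0, p))) ((PB n).image (fun p => (1, p))) :=
    d 0 1 _ _ (by omega)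
  have dis2 : Disjoint ((PA n).image (fun p => (0, p)) ∪ (PB n).image (fun p => (1, p)))
      ((PC1 n).image (fun p => (2, p))) := by
    rw [disjoint_union_left]
    exact ⟨d 0 2 _ _ (by omega), d 1 2 _ _ (by omega)⟩
  have dis3 : Disjoint ((PA n).image (fun p => (0, p)) ∪ (PB n).image (fun p => (1, p)) ∪
      (PC1 n).image (fun p => (2, p))) ((PC2 n).image (fun p => (3, p))) := by
    rw [disjoint_union_left, disjoint_union_left]
    exact ⟨⟨d 0 3 _ _ (by omega), d 1 3 _ _ (by omega)⟩, d 2 3 _ _ (by omega)⟩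
  rw [PAll, card_union_of_disjoint dis3, card_union_of_disjoint dis2,
    card_union_of_disjoint dis1, h1, h1, h1, h1]

/-! ### master injectivity -/

lemma famPerm_injOn {n : ℕ} : Set.InjOn (famPerm n) ↑(PAll n) := by
  rintro ⟨t, a, b, c, d⟩ hq ⟨t', a', b', c', d'⟩ hq' heq
  rw [Finset.mem_coe, mem_PAll] at hq hq'
  simp only [Prod.mk.injEq]
  rcases hq with ⟨ht, hp⟩ | ⟨ht, hp⟩ | ⟨ht, hp⟩ | ⟨ht, hp⟩ <;>
    rcases hq' with ⟨ht', hp'⟩ | ⟨ht', hp'⟩ | ⟨ht', hp'⟩ | ⟨ht', hp'⟩ <;>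
    simp only at ht ht' <;> subst ht <;> subst ht' <;>
    simp only [famPerm_0, famPerm_1, famPerm_2, famPerm_3] at heq <;>
    dsimp only at heq hp hp' ⊢
  · rw [PA, mem_P4] at hp hp'
    have := injA hp.1 hp.2.1 hp.2.2.1 hp.2.2.2 hp'.1 hp'.2.1 hp'.2.2.1 hp'.2.2.2 heq
    omega
  · rw [PA, mem_P4] at hp; rw [mem_PB] at hp'
    exact absurd heq (notAB hp.1 hp.2.1 hp.2.2.1 hp.2.2.2
      hp'.1 hp'.2.1 hp'.2.2.1 hp'.2.2.2.1 hp'.2.2.2.2)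
  · rw [PA, mem_P4] at hp; rw [mem_PC1] at hp'
    exact absurd heq (notAC1 hp.1 hp.2.1 hp.2.2.1 hp.2.2.2
      hp'.1 hp'.2.1 hp'.2.2.1 hp'.2.2.2.1)
  · rw [PA, mem_P4] at hp; rw [mem_PC2] at hp'
    exact absurd heq (notAC2 hp.1 hp.2.1 hp.2.2.1 hp.2.2.2
      hp'.1 hp'.2.1 hp'.2.2.1 hp'.2.2.2.1)
  · rw [PA, mem_P4] at hp'; rw [mem_PB] at hp
    exact absurd heq.symm (notAB hp'.1 hp'.2.1 hp'.2.2.1 hp'.2.2.2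
      hp.1 hp.2.1 hp.2.2.1 hp.2.2.2.1 hp.2.2.2.2)
  · rw [mem_PB] at hp hp'
    have := injB_window hp.1 hp.2.1 hp.2.2.1 hp.2.2.2.1 hp.2.2.2.2
      hp'.1 hp'.2.1 hp'.2.2.1 hp'.2.2.2.1 hp'.2.2.2.2 heq
    omega
  · rw [mem_PB] at hp; rw [mem_PC1] at hp'
    exact absurd heq (notBC1 hp.1 hp.2.1 hp.2.2.1 hp.2.2.2.1 hp.2.2.2.2
      hp'.1 hp'.2.1 hp'.2.2.1 hp'.2.2.2.1 hp'.2.2.2.2)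
  · rw [mem_PB] at hp; rw [mem_PC2] at hp'
    exact absurd heq (notBC2 hp.1 hp.2.1 hp.2.2.1 hp.2.2.2.1 hp.2.2.2.2
      hp'.1 hp'.2.1 hp'.2.2.1 hp'.2.2.2.1 hp'.2.2.2.2.1)
  · rw [PA, mem_P4] at hp'; rw [mem_PC1] at hp
    exact absurd heq.symm (notAC1 hp'.1 hp'.2.1 hp'.2.2.1 hp'.2.2.2
      hp.1 hp.2.1 hp.2.2.1 hp.2.2.2.1)
  · rw [mem_PB] at hp'; rw [mem_PC1] at hp
    exact absurd heq.symm (notBC1 hp'.1 hp'.2.1 hp'.2.2.1 hp'.2.2.2.1 hp'.2.2.2.2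
      hp.1 hp.2.1 hp.2.2.1 hp.2.2.2.1 hp.2.2.2.2)
  · rw [mem_PC1] at hp hp'
    have := injC1 hp.1 hp.2.1 hp.2.2.1 hp.2.2.2.1 hp'.1 hp'.2.1 hp'.2.2.1 hp'.2.2.2.1 heq
    omega
  · rw [mem_PC1] at hp; rw [mem_PC2] at hp'
    exact absurd heq (notC1C2 hp.1 hp.2.1 hp.2.2.1 hp.2.2.2.1
      hp'.1 hp'.2.1 hp'.2.2.1 hp'.2.2.2.1 hp'.2.2.2.2.2)
  · rw [PA, mem_P4] at hp'; rw [mem_PC2] at hp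
    exact absurd heq.symm (notAC2 hp'.1 hp'.2.1 hp'.2.2.1 hp'.2.2.2
      hp.1 hp.2.1 hp.2.2.1 hp.2.2.2.1)
  · rw [mem_PB] at hp'; rw [mem_PC2] at hp
    exact absurd heq.symm (notBC2 hp'.1 hp'.2.1 hp'.2.2.1 hp'.2.2.2.1 hp'.2.2.2.2
      hp.1 hp.2.1 hp.2.2.1 hp.2.2.2.1 hp.2.2.2.2.1)
  · rw [mem_PC1] at hp'; rw [mem_PC2] at hp
    exact absurd heq.symm (notC1C2 hp'.1 hp'.2.1 hp'.2.2.1 hp'.2.2.2.1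
      hp.1 hp.2.1 hp.2.2.1 hp.2.2.2.1 hp.2.2.2.2.2)
  · rw [mem_PC2] at hp hp'
    have := injC2 hp.1 hp.2.1 hp.2.2.1 hp.2.2.2.1 hp'.1 hp'.2.1 hp'.2.2.1 hp'.2.2.2.1 heq
    omega

/-! ### soundness : every family member is in the sphere of radius 2 -/

lemma famPerm_spec {n : ℕ} {q : ℕ × Quad} (hq : q ∈ PAll n) :
    famPerm n q ∉ reversals n ∧ famPerm n q ≠ 1 ∧
      ∃ a b, a ∈ reversals n ∧ b ∈ reversals n ∧ famPerm n q = a * b := by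
  obtain ⟨t, a, b, c, d⟩ := q
  rw [mem_PAll] at hq
  rcases hq with ⟨ht, hp⟩ | ⟨ht, hp⟩ | ⟨ht, hp⟩ | ⟨ht, hp⟩ <;>
    simp only at ht <;> subst ht <;> dsimp only at hp
  · rw [PA, mem_P4] at hp
    obtain ⟨h1, h2, h3, h4⟩ := hp
    rw [famPerm_0]
    dsimp only
    refine ⟨notRev_A h1 h2 h3 h4, ?_, _, _,
      revPerm_isReversal h1 (by omega), revPerm_isReversal h3 (by omega), rfl⟩
    intro h
    exact moveA_i h1 h2 h3 h4 (by rw [h]; rfl)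
  · rw [mem_PB] at hp
    obtain ⟨h1, h2, h3, h4, h5⟩ := hp
    rw [famPerm_1]
    dsimp only
    refine ⟨notRev_B h1 h2 h3 h4 h5, ?_, _, _,
      revPerm_isReversal (by omega) h4, revPerm_isReversal h2 (by omega), rfl⟩
    intro h
    exact moveB_w1 h1 h2 h3 h4 h5 (by rw [h]; rfl)
  · rw [mem_PC1] at hp
    obtain ⟨h1, h2, h3, h4, h5⟩ := hp
    rw [famPerm_2]
    dsimp only
    refine ⟨notRev_C1 h1 h2 h3 h4, ?_, _, _,
      revPerm_isReversal (by omega) (by omega), revPerm_isReversal (by omega) h4, rfl⟩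
    intro h
    exact moveC1_i h1 h2 h3 h4 (by rw [h]; rfl)
  · rw [mem_PC2] at hp
    obtain ⟨h1, h2, h3, h4, h5, h6⟩ := hp
    rw [famPerm_3]
    dsimp only
    refine ⟨notRev_C2 h1 h2 h3 h4, ?_, _, _,
      revPerm_isReversal (by omega) h4, revPerm_isReversal (by omega) (by omega), rfl⟩
    intro h
    exact moveC2_i h1 h2 h3 h4 (by rw [h]; rfl)

/-! ### completeness -/

lemma famPerm_complete {n : ℕ} {π : Equiv.Perm (Fin n)} (hne : π ≠ 1)
    (ha : ∃ a b, a ∈ reversals n ∧ b ∈ reversals n ∧ π = a * b) :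
    ∃ q ∈ PAll n, famPerm n q = π := by
  obtain ⟨a, b, haR, hbR, rfl⟩ := ha
  obtain ⟨i, j, hij, hjn, rfl⟩ := isReversal_iff.mp haR
  obtain ⟨k, l, hkl, hln, rfl⟩ := isReversal_iff.mp hbR
  by_cases hE : i = k ∧ j = l
  · obtain ⟨rfl, rfl⟩ := hE
    exact absurd revPerm_mul_self hne
  by_cases h2 : j < k
  · exact ⟨(0, (i, j, k, l)), mem_PAll.mpr (Or.inl ⟨rfl, by rw [PA, mem_P4]; omega⟩), rfl⟩
  by_cases h3 : l < i
  · refine ⟨(0, (k, l, i, j)), mem_PAll.mpr (Or.inl ⟨rfl, by rw [PA, mem_P4]; omega⟩), ?_⟩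
    rw [famPerm_0]
    exact (id_comm_disjoint hkl h3 hij hjn).symm
  by_cases h4 : i ≤ k ∧ l ≤ j
  · refine ⟨(1, (i, k, l, j)), mem_PAll.mpr (Or.inr (Or.inl ⟨rfl, by rw [mem_PB]; omega⟩)), rfl⟩
  by_cases h5 : k ≤ i ∧ j ≤ l
  · refine ⟨(1, (k, k + l - j, k + l - i, l)),
      mem_PAll.mpr (Or.inr (Or.inl ⟨rfl, by rw [mem_PB]; omega⟩)), ?_⟩
    rw [famPerm_1]
    exact (id_conj_nested h5.1 hij h5.2 hln).symm
  by_cases h6 : i < k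
  · -- overlap, left interval applied second : C1
    have hov : k ≤ j ∧ j < l := by omega
    by_cases hx : k = i + 1 ∧ j = i + 1 ∧ l = i + 2
    · obtain ⟨e1, e2, e3⟩ := hx
      subst e1 e2 e3
      refine ⟨(1, (i, i, i+1, i+2)),
        mem_PAll.mpr (Or.inr (Or.inl ⟨rfl, by rw [mem_PB]; omega⟩)), ?_⟩
      rw [famPerm_1]
      exact (id_sh1 (by omega)).symm
    · exact ⟨(2, (i, k, j, l)),
        mem_PAll.mpr (Or.inr (Or.inr (Or.inl ⟨rfl, by rw [mem_PC1]; omega⟩))), rfl⟩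
  · -- overlap, other side : C2 with parameters (k, i, l, j)
    have hov : k < i ∧ i ≤ l ∧ l < j := by omega
    by_cases hy : i = k + 1 ∧ l = k + 1 ∧ j = k + 2
    · obtain ⟨e1, e2, e3⟩ := hy
      subst e1 e2 e3
      refine ⟨(1, (k, k+1, k+2, k+2)),
        mem_PAll.mpr (Or.inr (Or.inl ⟨rfl, by rw [mem_PB]; omega⟩)), ?_⟩
      rw [famPerm_1]
      exact (id_sh2 (by omega)).symm
    by_cases hz : i = k + 1 ∧ l = k + 2 ∧ j = k + 3
    · obtain ⟨e1, e2, e3⟩ := hz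
      subst e1 e2 e3
      refine ⟨(2, (k, k+1, k+2, k+3)),
        mem_PAll.mpr (Or.inr (Or.inr (Or.inl ⟨rfl, by rw [mem_PC1]; omega⟩))), ?_⟩
      rw [famPerm_2]
      exact (id_dbl (by omega)).symm
    · exact ⟨(3, (k, i, l, j)),
        mem_PAll.mpr (Or.inr (Or.inr (Or.inr ⟨rfl, by rw [mem_PC2]; omega⟩))), rfl⟩

/-! ### sphere identifications -/

def PR (n : ℕ) : Finset (ℕ × ℕ) := (P2' n).image (fun p => (p.1, p.2.1))

lemma mem_PR {n a b : ℕ} : (a, b) ∈ PR n ↔ a < b ∧ b < n := by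
  simp only [PR, mem_image, Prod.mk.injEq]
  constructor
  · rintro ⟨⟨x, y, z, w⟩, hp, h1, h2⟩
    rw [mem_P2'] at hp
    dsimp only at h1 h2
    omega
  · rintro ⟨h1, h2⟩
    exact ⟨(a, b, b, b), by rw [mem_P2']; omega, rfl, rfl⟩

lemma card_PR {n : ℕ} : (PR n).card = (P2' n).card := by
  apply card_image_of_injOn
  rintro ⟨a, b, c, d⟩ h1 ⟨a', b', c', d'⟩ h2 h
  rw [Finset.mem_coe, mem_P2'] at h1 h2
  simp only [Prod.mk.injEq] at h ⊢
  omega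

lemma sphere1_eq {n : ℕ} :
    {π : Equiv.Perm (Fin n) | (cayleyGraph (reversals n)).dist 1 π = 1} =
      ↑((PR n).image (fun p => revPerm n p.1 p.2)) := by
  ext π
  rw [Set.mem_setOf_eq, dist_one_iff, Finset.coe_image, Set.mem_image]
  constructor
  · intro h
    obtain ⟨i, j, hij, hjn, rfl⟩ := isReversal_iff.mp h
    exact ⟨(i, j), by rw [Finset.mem_coe, mem_PR]; omega, rfl⟩
  · rintro ⟨⟨i, j⟩, hp, rfl⟩
    rw [Finset.mem_coe, mem_PR] at hp
    exact revPerm_isReversal hp.1 hp.2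

lemma sphere2_eq {n : ℕ} :
    {π : Equiv.Perm (Fin n) | (cayleyGraph (reversals n)).dist 1 π = 2} =
      ↑((PAll n).image (famPerm n)) := by
  ext π
  rw [Set.mem_setOf_eq, dist_two_iff, Finset.coe_image, Set.mem_image]
  constructor
  · rintro ⟨h1, h2, h3⟩
    obtain ⟨q, hq, hfq⟩ := famPerm_complete h2 h3
    exact ⟨q, hq, hfq⟩
  · rintro ⟨q, hq, rfl⟩
    rw [Finset.mem_coe] at hq
    exact famPerm_spec hq

theorem reversals_sphere_one_two_card' (n : ℕ) (hn : 3 ≤ n) :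
    Nat.card {π : Equiv.Perm (Fin n) | (cayleyGraph (reversals n)).dist 1 π = 1} =
        n * (n - 1) / 2 ∧
      (Nat.card {π : Equiv.Perm (Fin n) | (cayleyGraph (reversals n)).dist 1 π = 2} : ℚ) =
        ((n : ℚ) ^ 4 - 2 * (n : ℚ) ^ 3 - (n : ℚ) ^ 2 - 16 * (n : ℚ) + 42) / 6 := by
  obtain ⟨m, rfl⟩ : ∃ m, n = m + 3 := ⟨n - 3, by omega⟩
  constructor
  · rw [sphere1_eq, Nat.card_coe_set_eq, Set.ncard_coe_finset]
    rw [card_image_of_injOn (by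
      rintro ⟨a, b⟩ h1 ⟨a', b'⟩ h2 h
      rw [Finset.mem_coe, mem_PR] at h1 h2
      have := revPerm_inj h1.1 h1.2 h2.1 h2.2 h
      simp only [Prod.mk.injEq]
      omega)]
    rw [card_PR]
    have := card_P2' (m + 3)
    omega
  · rw [sphere2_eq, Nat.card_coe_set_eq, Set.ncard_coe_finset,
      card_image_of_injOn famPerm_injOn, card_PAll]
    have q4 := card_P4 (m + 3)
    have q3 := card_P3 (m + 3)
    have qB := card_PB (m + 3)
    have qC1 := card_PC1 (m + 3) (by omega)
    have qC2 := card_PC2 (m + 3) (by omega)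
    have hs1 : m + 3 - 1 = m + 2 := by omega
    have hs2 : m + 3 - 2 = m + 1 := by omega
    have hs3 : m + 3 - 3 = m := by omega
    rw [hs1, hs2, hs3] at q4
    rw [hs1, hs2] at q3
    rw [hs2] at qC1
    rw [hs2, hs3] at qC2
    rw [PA]
    have c4 : ((P4 (m+3)).card : ℚ) * 24 = (m+3) * (m+2) * (m+1) * m := by exact_mod_cast q4
    have c3 : ((P3 (m+3)).card : ℚ) * 6 = (m+3) * (m+2) * (m+1) := by exact_mod_cast q3
    have cB : ((PB (m+3)).card : ℚ) = (P4 (m+3)).card + 2 * (P3 (m+3)).card := by exact_mod_cast qB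
    have cC1 : ((PC1 (m+3)).card : ℚ) + (m+1) = (P4 (m+3)).card + (P3 (m+3)).card := by
      exact_mod_cast qC1
    have cC2 : ((PC2 (m+3)).card : ℚ) + (m+1) + m = (P4 (m+3)).card + (P3 (m+3)).card := by
      exact_mod_cast qC2
    push_cast
    rw [eq_div_iff (by norm_num : (6:ℚ) ≠ 0)]
    linear_combination c4 + 4 * c3 + 6 * cB + 6 * cC1 + 6 * cC2


/-- In the reversal graph `Rₙ` (`n ≥ 3`), the sphere of radius `1` around the identity
has cardinality `n(n−1)/2` and the sphere of radius `2` has cardinality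
`(n⁴ − 2n³ − n² − 16n + 42)/6`. -/
theorem reversals_sphere_one_two_card (n : ℕ) (hn : 3 ≤ n) :
    Nat.card {π : Equiv.Perm (Fin n) | (cayleyGraph (reversals n)).dist 1 π = 1} =
        n * (n - 1) / 2 ∧
      (Nat.card {π : Equiv.Perm (Fin n) | (cayleyGraph (reversals n)).dist 1 π = 2} : ℚ) =
        ((n : ℚ) ^ 4 - 2 * (n : ℚ) ^ 3 - (n : ℚ) ^ 2 - 16 * (n : ℚ) + 42) / 6 :=
  reversals_sphere_one_two_card' n hn
end

section
/- (Glushkov's bound) Let n ≥ 2, let L ∈ Sₙ be the n-cycle (1 2 … n) (the left cyclic shift) and let X = (1 2) be the transposition of the first two elements. Then every permutation of Sₙ can be written as a product of at most 2n² factors, each factor equal to L or to X (no inverses allowed); that is, the diameter of the directed Cayley graph of Sₙ generated by {L, X} is at most 2n². -/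
namespace Glushkov

open Fin.NatCast Fin.CommRing

abbrev L (m : ℕ) : Equiv.Perm (Fin (m+2)) := finRotate (m+2)
abbrev X (m : ℕ) : Equiv.Perm (Fin (m+2)) := Equiv.swap ⟨0, by omega⟩ ⟨1, by omega⟩

lemma pow_apply {m : ℕ} (r : ℕ) (k : Fin (m+2)) :
    ((L m)^r) k = k + (r : Fin (m+2)) := by
  induction r with
  | zero => simp
  | succ r ih =>
    rw [pow_succ', Equiv.Perm.mul_apply, ih]
    show finRotate (m+2) _ = _
    rw [finRotate_succ_apply]
    push_cast
    ring

lemma pow_apply' {m : ℕ} (r k : ℕ) (h : k + r < m+2) :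
    ((L m)^r) ⟨k, by omega⟩ = ⟨k + r, h⟩ := by
  rw [pow_apply]
  apply Fin.ext
  rw [Fin.add_def, Fin.val_natCast]
  show (k + r % (m+2)) % (m+2) = k + r
  have h1 : r % (m+2) = r := Nat.mod_eq_of_lt (by omega)
  rw [h1]
  exact Nat.mod_eq_of_lt h

lemma L_pow_top {m : ℕ} : (L m)^(m+2) = 1 := by
  ext k
  rw [pow_apply]
  simp [Fin.natCast_self]

/-- `D m r` is the cycle `0 → 1 → ⋯ → r → 0` (for `r < m+2`). -/
def D (m r : ℕ) : Equiv.Perm (Fin (m+2)) := ((X m) * (L m))^r * ((L m)^r)⁻¹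

lemma D_succ {m : ℕ} (r : ℕ) (h : r + 1 < m + 2) :
    D m (r+1) = D m r * Equiv.swap ⟨r, by omega⟩ ⟨r+1, h⟩ := by
  have h0 : ((L m)^r) ⟨0, by omega⟩ = ⟨r, by omega⟩ := by
    rw [pow_apply' r 0 (by omega)]
    exact Fin.ext (by show 0 + r = r; omega)
  have h1 : ((L m)^r) ⟨1, by omega⟩ = ⟨r+1, h⟩ := by
    rw [pow_apply' r 1 (by omega)]
    exact Fin.ext (by show 1 + r = r + 1; omega)
  have hswap : Equiv.swap (⟨r, by omega⟩ : Fin (m+2)) ⟨r+1, h⟩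
      = (L m)^r * (X m) * ((L m)^r)⁻¹ := by
    rw [← h0, ← h1, Equiv.swap_apply_apply]
  rw [hswap, D, D, pow_succ]
  group

lemma D_fix {m : ℕ} (r : ℕ) (hr : r < m+2) :
    (∀ k : Fin (m+2), r < k.val → D m r k = k) ∧ D m r ⟨r, hr⟩ = ⟨0, by omega⟩ := by
  induction r with
  | zero =>
    have : D m 0 = 1 := by simp [D]
    simp [this]
  | succ r ih =>
    obtain ⟨ih1, ih2⟩ := ih (by omega)
    rw [D_succ r hr]
    constructor
    · intro k hk
      rw [Equiv.Perm.mul_apply,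
        Equiv.swap_apply_of_ne_of_ne (by intro h; apply absurd (congrArg Fin.val h); simp; omega)
          (by intro h; apply absurd (congrArg Fin.val h); simp; omega)]
      exact ih1 k (by omega)
    · rw [Equiv.Perm.mul_apply, Equiv.swap_apply_right]
      exact ih2

/-- The word `L^j (XL)^r L^t`. -/
def W (m j r t : ℕ) : List (Equiv.Perm (Fin (m+2))) :=
  List.replicate j (L m) ++ (List.replicate r [X m, L m]).flatten ++ List.replicate t (L m)

lemma W_length (m j r t : ℕ) : (W m j r t).length = j + 2*r + t := by
  simp [W]; ring

lemma W_mem (m j r t : ℕ) : ∀ x ∈ W m j r t, x = L m ∨ x = X m := by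
  intro x hx
  simp only [W, List.mem_append, List.mem_replicate, List.mem_flatten] at hx
  rcases hx with (⟨_, h⟩ | ⟨l, hl, hx⟩) | ⟨_, h⟩
  · exact Or.inl h
  · rw [hl.2] at hx
    simp only [List.mem_cons, List.not_mem_nil, or_false] at hx
    tauto
  · exact Or.inl h

lemma W_prod (m j r t : ℕ) : (W m j r t).prod = (L m)^j * ((X m) * (L m))^r * (L m)^t := by
  simp [W, List.prod_replicate, List.prod_flatten, List.map_replicate, mul_assoc]

lemma main (m : ℕ) : ∀ mm : ℕ, mm ≤ m + 2 → ∀ π : Equiv.Perm (Fin (m+2)),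
    (∀ k : Fin (m+2), mm ≤ k.val → π k = k) →
    ∃ l : List (Equiv.Perm (Fin (m+2))),
      l.length ≤ 2*(m+2)*mm ∧ (∀ x ∈ l, x = L m ∨ x = X m) ∧ l.prod = π := by
  intro mm
  induction mm with
  | zero =>
    intro _ π hfix
    have : π = 1 := Equiv.ext fun k => hfix k (Nat.zero_le _)
    exact ⟨[], by simp [this]⟩
  | succ mm ih =>
    intro hm π hfix
    have hmm : mm < m + 2 := by omega
    obtain ⟨j, hjdef⟩ : ∃ j : Fin (m+2), j = π ⟨mm, hmm⟩ := ⟨_, rfl⟩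
    have hj : j.val ≤ mm := by
      by_contra hc
      have h1 : π j = j := hfix j (by omega)
      have h2 : (⟨mm, hmm⟩ : Fin (m+2)) = j := π.injective (by rw [h1, hjdef])
      have := congrArg Fin.val h2
      simp at this; omega
    obtain ⟨r, hrdef⟩ : ∃ r : ℕ, r = mm - j.val := ⟨_, rfl⟩
    obtain ⟨c, hcdef⟩ : ∃ c : Equiv.Perm (Fin (m+2)),
        c = (L m)^j.val * D m r * ((L m)^j.val)⁻¹ := ⟨_, rfl⟩
    have hinv : ∀ (a : ℕ) (ha : a < m+2) (haj : j.val ≤ a),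
        ((L m)^j.val)⁻¹ ⟨a, ha⟩ = ⟨a - j.val, by omega⟩ := by
      intro a ha haj
      have : ((L m)^j.val) ⟨a - j.val, by omega⟩ = ⟨a, ha⟩ := by
        rw [pow_apply' j.val (a - j.val) (by omega)]
        exact Fin.ext (by show a - j.val + j.val = a; omega)
      rw [← this, Equiv.Perm.inv_def, Equiv.symm_apply_apply]
    have hc1 : c ⟨mm, hmm⟩ = j := by
      rw [hcdef, Equiv.Perm.mul_apply, Equiv.Perm.mul_apply, hinv mm hmm hj]
      have : (⟨mm - j.val, by omega⟩ : Fin (m+2)) = ⟨r, by omega⟩ := Fin.ext (by show mm - j.val = r; omega)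
      rw [this, (D_fix r (by omega)).2, pow_apply' j.val 0 (by omega)]
      exact Fin.ext (by show 0 + j.val = j.val; omega)
    have hc2 : ∀ k : Fin (m+2), mm < k.val → c k = k := by
      intro k hk
      rw [hcdef, Equiv.Perm.mul_apply, Equiv.Perm.mul_apply]
      have hke : k = ⟨k.val, k.isLt⟩ := Fin.ext rfl
      rw [hke, hinv k.val k.isLt (by omega), (D_fix r (by omega)).1 _ (by show r < k.val - j.val; omega),
        pow_apply' j.val (k.val - j.val) (by omega)]
      exact Fin.ext (by show k.val - j.val + j.val = k.val; omega)
    obtain ⟨σ, hsdef⟩ : ∃ σ : Equiv.Perm (Fin (m+2)), σ = c⁻¹ * π := ⟨_, rfl⟩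
    have hsfix : ∀ k : Fin (m+2), mm ≤ k.val → σ k = k := by
      intro k hk
      rcases eq_or_lt_of_le hk with heq | hlt
      · have hke : k = ⟨mm, hmm⟩ := Fin.ext heq.symm
        rw [hsdef, Equiv.Perm.mul_apply, hke, ← hjdef, ← hc1, Equiv.Perm.inv_def, Equiv.symm_apply_apply]
      · rw [hsdef, Equiv.Perm.mul_apply, hfix k (by omega), ← hc2 k hlt,
          Equiv.Perm.inv_def, Equiv.symm_apply_apply, hc2 k hlt]
    obtain ⟨l', hl1, hl2, hl3⟩ := ih (by omega) σ hsfix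
    refine ⟨W m j.val r (m+2-mm) ++ l', ?_, ?_, ?_⟩
    · rw [List.length_append, W_length]
      have hstep : j.val + 2*r + (m+2-mm) ≤ 2*(m+2) := by
        have := j.isLt
        omega
      calc j.val + 2*r + (m+2-mm) + l'.length
          ≤ 2*(m+2) + 2*(m+2)*mm := Nat.add_le_add hstep hl1
        _ = 2*(m+2)*(mm+1) := by ring
    · intro x hx
      rcases List.mem_append.mp hx with h | h
      · exact W_mem m _ _ _ x h
      · exact hl2 x h
    · rw [List.prod_append, W_prod, hl3, hsdef]
      have hW : (L m)^j.val * ((X m) * (L m))^r * (L m)^(m+2-mm) = c := by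
        have h1 : (L m)^(m+2-mm) = ((L m)^mm)⁻¹ := by
          apply eq_inv_of_mul_eq_one_left
          rw [← pow_add]
          have : m + 2 - mm + mm = m + 2 := by omega
          rw [this, L_pow_top]
        have h3 : j.val + r = mm := by omega
        have h2 : ((L m)^mm)⁻¹ = ((L m)^r)⁻¹ * ((L m)^j.val)⁻¹ := by
          rw [← h3, pow_add, mul_inv_rev]
        rw [h1, h2, hcdef, D]
        group
      rw [hW, ← mul_assoc, mul_inv_cancel, one_mul]

end Glushkov

/-- Glushkov's bound: for `n ≥ 2`, every permutation of `Sₙ` is a product of at most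
`2n²` factors, each equal to the left cyclic shift `L = (1 2 … n)` (realized as
`finRotate n`, the cycle sending each element of `Fin n` to the next) or to the
transposition `X = (1 2)` of the first two elements — no inverses allowed. In other
words the diameter of the directed Cayley graph of `Sₙ` generated by `{L, X}` is at
most `2n²`. -/
theorem glushkov_directed_diameter_bound (n : ℕ) (hn : 2 ≤ n) (π : Equiv.Perm (Fin n)) :
    ∃ l : List (Equiv.Perm (Fin n)),
      l.length ≤ 2 * n ^ 2 ∧
      (∀ x ∈ l, x = finRotate n ∨ x = Equiv.swap ⟨0, by omega⟩ ⟨1, by omega⟩) ∧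
      l.prod = π := by
  obtain ⟨m, rfl⟩ : ∃ m, n = m + 2 := ⟨n - 2, by omega⟩
  obtain ⟨l, h1, h2, h3⟩ := Glushkov.main m (m+2) le_rfl π
    (fun k hk => absurd k.isLt (by omega))
  refine ⟨l, by nlinarith, ?_, h3⟩
  exact h2
end

section
/- Let n ≥ 2 and m ≥ 3, and let U(n, ℤ/mℤ) be the group of upper unitriangular n×n matrices over ℤ/mℤ (upper triangular matrices with ones on the diagonal), with generating set S = {I ± E_{i,i+1} : 1 ≤ i ≤ n−1}, where E_{i,i+1} is the matrix unit with a 1 in position (i, i+1) and zeros elsewhere. Then the diameter of the Cayley graph Cay(U(n, ℤ/mℤ), S) is at least (n−1)·⌊m/2⌋. -/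
/-- The standard generators of the unitriangular group `U(n, ℤ/mℤ)`: the matrices
`I ± E_{i,i+1}` for `1 ≤ i ≤ n−1`, where `E_{i,i+1}` is the matrix unit with a `1` in
position `(i, i+1)` and zeros elsewhere. -/
def unitriangularGenerators (n m : ℕ) : Set (Matrix (Fin n) (Fin n) (ZMod m)) :=
  {A | ∃ i j : Fin n, (i : ℕ) + 1 = (j : ℕ) ∧
    (A = 1 + Matrix.single i j 1 ∨ A = 1 - Matrix.single i j 1)}

namespace UnitriAux

variable {n m : ℕ}

/-- Upper unitriangular predicate: on or below the diagonal, entries agree with `1`. -/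
def Uni (A : Matrix (Fin n) (Fin n) (ZMod m)) : Prop :=
  ∀ i j : Fin n, (j : ℕ) ≤ (i : ℕ) → A i j = if i = j then 1 else 0

/-- The first superdiagonal entry at row `i` (or `0` if there is no such entry). -/
def g (A : Matrix (Fin n) (Fin n) (ZMod m)) (i : Fin n) : ZMod m :=
  if h : (i : ℕ) + 1 < n then A i ⟨(i : ℕ) + 1, h⟩ else 0

lemma uni_one : Uni (1 : Matrix (Fin n) (Fin n) (ZMod m)) :=
  fun _ _ _ => Matrix.one_apply

lemma uni_mul {A B : Matrix (Fin n) (Fin n) (ZMod m)} (hA : Uni A) (hB : Uni B) :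
    Uni (A * B) := by
  intro i j hj
  rw [Matrix.mul_apply, Finset.sum_eq_single j]
  · rw [hB j j le_rfl, if_pos rfl, mul_one, hA i j hj]
  · intro k _ hk
    have hk' : (k : ℕ) ≠ (j : ℕ) := fun h => hk (Fin.ext h)
    rcases lt_or_gt_of_ne hk' with h | h
    · rw [hA i k (by omega), if_neg
        (fun e => absurd (congrArg Fin.val e) (by omega)), zero_mul]
    · rw [hB k j (by omega), if_neg hk, mul_zero]
  · intro hj'; exact absurd (Finset.mem_univ j) hj'

lemma g_mul {A B : Matrix (Fin n) (Fin n) (ZMod m)} (hA : Uni A) (hB : Uni B) (i : Fin n) :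
    g (A * B) i = g A i + g B i := by
  unfold g
  split
  case isFalse h => simp
  case isTrue h =>
    have hij : i ≠ (⟨(i : ℕ) + 1, h⟩ : Fin n) := by
      intro e
      have := congrArg Fin.val e
      simp at this
    rw [Matrix.mul_apply]
    have key : ∀ k : Fin n, A i k * B k ⟨(i : ℕ) + 1, h⟩ =
        (if k = i then B i ⟨(i : ℕ) + 1, h⟩ else 0) +
        (if k = (⟨(i : ℕ) + 1, h⟩ : Fin n) then A i ⟨(i : ℕ) + 1, h⟩ else 0) := by
      intro k
      by_cases hki : k = i
      · rw [hki, hA i i le_rfl, if_pos rfl, one_mul, if_pos rfl, if_neg hij, add_zero]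
      · by_cases hkj : k = (⟨(i : ℕ) + 1, h⟩ : Fin n)
        · rw [hkj, hB _ _ le_rfl, if_pos rfl, mul_one, if_neg (Ne.symm hij),
            if_pos rfl, zero_add]
        · have hkv : (k : ℕ) ≠ (i : ℕ) + 1 := fun e => hkj (Fin.ext e)
          rw [if_neg hki, if_neg hkj, add_zero]
          rcases lt_or_gt_of_ne hkv with hlt | hgt
          · rw [hA i k (by omega), if_neg
              (fun e => hki (Fin.ext (congrArg Fin.val e).symm)), zero_mul]
          · rw [hB k ⟨(i : ℕ) + 1, h⟩ (by simpa using hgt.le), if_neg hkj, mul_zero]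
    rw [Finset.sum_congr rfl (fun k _ => key k), Finset.sum_add_distrib,
      Finset.sum_ite_eq' Finset.univ i (fun _ => B i ⟨(i : ℕ) + 1, h⟩),
      Finset.sum_ite_eq' Finset.univ (⟨(i : ℕ) + 1, h⟩ : Fin n)
        (fun _ => A i ⟨(i : ℕ) + 1, h⟩)]
    simp [add_comm]

lemma g_one (i : Fin n) : g (1 : Matrix (Fin n) (Fin n) (ZMod m)) i = 0 := by
  unfold g
  split
  case isTrue h =>
    exact Matrix.one_apply_ne (fun e => by have := congrArg Fin.val e; simp at this)
  case isFalse h => rfl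

lemma uni_prod {l : List (Matrix (Fin n) (Fin n) (ZMod m))}
    (hl : ∀ x ∈ l, Uni x) : Uni l.prod := by
  induction l with
  | nil => simpa using uni_one
  | cons x l ih =>
    rw [List.prod_cons]
    exact uni_mul (hl x (List.mem_cons_self))
      (ih fun a ha => hl a (List.mem_cons_of_mem _ ha))

lemma g_prod {l : List (Matrix (Fin n) (Fin n) (ZMod m))}
    (hl : ∀ x ∈ l, Uni x) (i : Fin n) :
    g l.prod i = (l.map (g · i)).sum := by
  induction l with
  | nil => simpa using g_one i
  | cons x l ih =>
    rw [List.prod_cons, g_mul (hl x (List.mem_cons_self))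
      (uni_prod fun a ha => hl a (List.mem_cons_of_mem _ ha)),
      List.map_cons, List.sum_cons, ih fun a ha => hl a (List.mem_cons_of_mem _ ha)]

lemma uni_gen {A : Matrix (Fin n) (Fin n) (ZMod m)}
    (hA : A ∈ unitriangularGenerators n m) : Uni A := by
  obtain ⟨a, b, hab, h | h⟩ := hA <;> subst h <;> intro i j hj <;>
    have hz : Matrix.single a b (1 : ZMod m) i j = 0 :=
      Matrix.single_apply_of_ne _ _ _ _ _ (by rintro ⟨rfl, rfl⟩; omega)
  · rw [Matrix.add_apply, hz, add_zero]; exact Matrix.one_apply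
  · rw [Matrix.sub_apply, hz, sub_zero]; exact Matrix.one_apply

lemma g_one_add (a b : Fin n) (hab : (a : ℕ) + 1 = (b : ℕ)) (c : ZMod m) (i : Fin n) :
    g (1 + Matrix.single a b c) i = if i = a then c else 0 := by
  unfold g
  split
  case isTrue h =>
    rw [Matrix.add_apply, Matrix.one_apply_ne
      (fun e => by have := congrArg Fin.val e; simp at this), zero_add]
    by_cases hia : i = a
    · subst hia
      rw [if_pos rfl, show (⟨(i : ℕ) + 1, h⟩ : Fin n) = b from Fin.ext hab,
        Matrix.single_apply_same]
    · have hz : Matrix.single a b c i (⟨(i : ℕ) + 1, h⟩ : Fin n) = 0 := by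
        apply Matrix.single_apply_of_ne
        rintro ⟨rfl, rfl⟩; exact hia rfl
      rw [if_neg hia, hz]
  case isFalse h =>
    rw [if_neg (fun e => h (by subst e; omega))]

lemma g_one_sub (a b : Fin n) (hab : (a : ℕ) + 1 = (b : ℕ)) (c : ZMod m) (i : Fin n) :
    g (1 - Matrix.single a b c) i = if i = a then -c else 0 := by
  unfold g
  split
  case isTrue h =>
    rw [Matrix.sub_apply, Matrix.one_apply_ne
      (fun e => by have := congrArg Fin.val e; simp at this), zero_sub]
    by_cases hia : i = a
    · subst hia
      rw [if_pos rfl, show (⟨(i : ℕ) + 1, h⟩ : Fin n) = b from Fin.ext hab,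
        Matrix.single_apply_same]
    · have hz : Matrix.single a b c i (⟨(i : ℕ) + 1, h⟩ : Fin n) = 0 := by
        apply Matrix.single_apply_of_ne
        rintro ⟨rfl, rfl⟩; exact hia rfl
      rw [if_neg hia, hz, neg_zero]
  case isFalse h =>
    rw [if_neg (fun e => h (by subst e; omega))]

lemma abs_sum_le (ε : ZMod m → ℤ) (hε : ∀ x, |ε x| ≤ 1) (hε0 : ε 0 = 0)
    (l : List (ZMod m)) :
    |(l.map ε).sum| ≤ (l.countP (fun x => decide (x ≠ 0)) : ℤ) := by
  induction l with
  | nil => simp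
  | cons x l ih =>
    rw [List.map_cons, List.sum_cons, List.countP_cons]
    refine le_trans (abs_add_le _ _) ?_
    by_cases hx : x = 0
    · subst hx
      simp only [hε0, abs_zero, zero_add, decide_not]
      simpa using ih
    · have hd : (decide (x ≠ 0)) = true := by simp [hx]
      rw [hd, if_pos rfl]
      push_cast
      linarith [hε x, ih]

lemma row_bound (hm : 3 ≤ m) (l : List (ZMod m))
    (hl : ∀ x ∈ l, x = 0 ∨ x = 1 ∨ x = -1)
    (hs : l.sum = ((m / 2 : ℕ) : ZMod m)) :
    m / 2 ≤ l.countP (fun x => decide (x ≠ 0)) := by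
  haveI : NeZero m := ⟨by omega⟩
  have h10 : (1 : ZMod m) ≠ 0 := by
    intro e
    have hd : (m : ℕ) ∣ 1 := (ZMod.natCast_eq_zero_iff 1 m).mp (by exact_mod_cast e)
    have := Nat.le_of_dvd one_pos hd
    omega
  have hn0 : (-1 : ZMod m) ≠ 0 := fun e => h10 (by linear_combination -e)
  have h1n : (1 : ZMod m) ≠ -1 := by
    intro e
    have : ((2 : ℕ) : ZMod m) = 0 := by push_cast; linear_combination e
    have hd := (ZMod.natCast_eq_zero_iff 2 m).mp this
    have := Nat.le_of_dvd two_pos hd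
    omega
  set ε : ZMod m → ℤ := fun x => if x = 1 then 1 else if x = -1 then -1 else 0 with hεdef
  have hε1 : ∀ x, |ε x| ≤ 1 := by
    intro x
    simp only [hεdef]
    split
    · simp
    · split <;> simp
  have hε0 : ε 0 = 0 := by
    simp only [hεdef, if_neg (Ne.symm h10), if_neg (Ne.symm hn0)]
  have hcast : ∀ x ∈ l, ((ε x : ℤ) : ZMod m) = x := by
    intro x hx
    rcases hl x hx with rfl | rfl | rfl
    · rw [hε0]; simp
    · simp [hεdef]
    · rw [hεdef]
      simp only [if_neg (Ne.symm h1n), if_pos rfl]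
      simp
  have hsum : (((l.map ε).sum : ℤ) : ZMod m) = ((m / 2 : ℕ) : ZMod m) := by
    rw [← hs]
    rw [show (((l.map ε).sum : ℤ) : ZMod m)
        = ((l.map ε).map (Int.cast : ℤ → ZMod m)).sum from
      map_list_sum (Int.castRingHom (ZMod m)) _, List.map_map]
    congr 1
    calc l.map ((Int.cast : ℤ → ZMod m) ∘ ε) = l.map id :=
          List.map_congr_left (fun x hx => hcast x hx)
      _ = l := List.map_id l
  set t := (l.map ε).sum with ht
  have hdvd : (m : ℤ) ∣ t - ((m / 2 : ℕ) : ℤ) := by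
    have : ((t - ((m / 2 : ℕ) : ℤ) : ℤ) : ZMod m) = 0 := by
      rw [Int.cast_sub, hsum, Int.cast_natCast, sub_self]
    exact (ZMod.intCast_zmod_eq_zero_iff_dvd _ m).mp this
  have habs := abs_sum_le ε hε1 hε0 l
  have hlow : ((m / 2 : ℕ) : ℤ) ≤ |t| := by
    by_contra hcon
    push_neg at hcon
    rw [abs_lt] at hcon
    have hb : |t - ((m / 2 : ℕ) : ℤ)| < (m : ℤ) := by
      rw [abs_lt]
      constructor <;> omega
    have h0 := Int.eq_zero_of_abs_lt_dvd hdvd hb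
    omega
  have : ((m / 2 : ℕ) : ℤ) ≤ (l.countP (fun x => decide (x ≠ 0)) : ℤ) :=
    le_trans hlow habs
  exact_mod_cast this

lemma sum_countP_le {α : Type*} (l : List α) (p : Fin n → α → Bool)
    (hp : ∀ x ∈ l, ∀ i₁ i₂, p i₁ x = true → p i₂ x = true → i₁ = i₂) :
    ∑ i : Fin n, l.countP (p i) ≤ l.length := by
  induction l with
  | nil => simp
  | cons x l ih =>
    simp only [List.countP_cons, List.length_cons]
    rw [Finset.sum_add_distrib]
    have h1 : (∑ i : Fin n, if p i x then 1 else 0) ≤ 1 := by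
      by_cases hx : ∃ i, p i x = true
      · obtain ⟨i₀, hi₀⟩ := hx
        calc (∑ i : Fin n, if p i x then 1 else 0)
            ≤ ∑ i : Fin n, if i = i₀ then 1 else 0 := by
              apply Finset.sum_le_sum
              intro i _
              by_cases h : p i x = true
              · rw [if_pos h, if_pos (hp x (List.mem_cons_self) i i₀ h hi₀)]
              · simp [h]
          _ = 1 := by
              rw [Finset.sum_ite_eq' Finset.univ i₀ (fun _ => 1)]
              simp
      · have hall : ∀ i : Fin n, (if p i x then 1 else 0) = 0 := by
          intro i
          rw [if_neg (fun h => hx ⟨i, h⟩)]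
        simp [hall]
    have h2 := ih (fun a ha => hp a (List.mem_cons_of_mem _ ha))
    omega

/-- The witness list: for each `i < n-1`, `⌊m/2⌋` copies of `1 + E_{i,i+1}`. -/
def genList (n m : ℕ) : List (Matrix (Fin n) (Fin n) (ZMod m)) :=
  (List.finRange (n - 1)).flatMap fun (i : Fin (n - 1)) =>
    List.replicate (m / 2)
      (1 + Matrix.single
        (⟨(i : ℕ), by have := i.isLt; omega⟩ : Fin n)
        (⟨(i : ℕ) + 1, by have := i.isLt; omega⟩ : Fin n) 1)

lemma genList_mem {x : Matrix (Fin n) (Fin n) (ZMod m)} (hx : x ∈ genList n m) :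
    x ∈ unitriangularGenerators n m := by
  simp only [genList, List.mem_flatMap, List.mem_replicate] at hx
  obtain ⟨i, -, -, rfl⟩ := hx
  exact ⟨_, _, rfl, Or.inl rfl⟩

lemma sum_flatMap' {α : Type*} {M : Type*} [AddCommMonoid M] (l : List α) (f : α → List M) :
    (l.flatMap f).sum = (l.map fun a => (f a).sum).sum := by
  induction l with
  | nil => simp
  | cons x l ih => simp [ih]

lemma g_genList (i : Fin n) (h : (i : ℕ) + 1 < n) :
    g (genList n m).prod i = ((m / 2 : ℕ) : ZMod m) := by
  rw [g_prod (fun x hx => uni_gen (genList_mem hx)) i]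
  rw [genList, List.map_flatMap, sum_flatMap', ← Fin.sum_univ_def]
  have hmap : ∀ j : Fin (n - 1),
      ((List.replicate (m / 2)
        (1 + Matrix.single
          (⟨(j : ℕ), by have := j.isLt; omega⟩ : Fin n)
          (⟨(j : ℕ) + 1, by have := j.isLt; omega⟩ : Fin n) (1 : ZMod m))).map
        (g · i)).sum
      = (m / 2) • (if i = (⟨(j : ℕ), by have := j.isLt; omega⟩ : Fin n)
          then (1 : ZMod m) else 0) := by
    intro j
    rw [List.map_replicate, List.sum_replicate]
    congr 1
    exact g_one_add _ _ rfl 1 i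
  rw [Finset.sum_congr rfl (fun j _ => hmap j)]
  rw [Finset.sum_eq_single (⟨(i : ℕ), by omega⟩ : Fin (n - 1))]
  · rw [if_pos (Fin.ext rfl), nsmul_eq_mul, mul_one]
  · intro j _ hj
    rw [if_neg, smul_zero]
    intro e
    exact hj (Fin.ext (by simpa using (congrArg Fin.val e).symm))
  · intro hmem
    exact absurd (Finset.mem_univ _) hmem

end UnitriAux

/-- The diameter of the Cayley graph of the unitriangular group `U(n, ℤ/mℤ)` (`n ≥ 2`,
`m ≥ 3`) with respect to the generators `I ± E_{i,i+1}` is at least `(n−1)·⌊m/2⌋`: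
there is an element of the group (i.e. a product of the generators) whose every
factorization into generators uses at least `(n−1)·⌊m/2⌋` factors. -/
theorem unitriangular_diam_lower_bound (n m : ℕ) (hn : 2 ≤ n) (hm : 3 ≤ m) :
    ∃ A : Matrix (Fin n) (Fin n) (ZMod m),
      (∃ l : List (Matrix (Fin n) (Fin n) (ZMod m)),
        (∀ x ∈ l, x ∈ unitriangularGenerators n m) ∧ l.prod = A) ∧
      ∀ l : List (Matrix (Fin n) (Fin n) (ZMod m)),
        (∀ x ∈ l, x ∈ unitriangularGenerators n m) → l.prod = A →
          (n - 1) * (m / 2) ≤ l.length := by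
  classical
  open UnitriAux in
  refine ⟨(genList n m).prod, ⟨genList n m, fun x hx => genList_mem hx, rfl⟩, ?_⟩
  intro l hl hprod
  have hval : ∀ x ∈ l, ∀ i : Fin n, g x i = 0 ∨ g x i = 1 ∨ g x i = -1 := by
    intro x hx i
    obtain ⟨a, b, hab, h | h⟩ := hl x hx <;> subst h
    · rw [g_one_add a b hab 1 i]
      split
      · exact Or.inr (Or.inl rfl)
      · exact Or.inl rfl
    · rw [g_one_sub a b hab 1 i]
      split
      · exact Or.inr (Or.inr rfl)
      · exact Or.inl rfl
  have key : ∀ i : Fin n, (i : ℕ) + 1 < n →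
      m / 2 ≤ l.countP (fun x => decide (g x i ≠ 0)) := by
    intro i hi
    have hsum : (l.map (g · i)).sum = ((m / 2 : ℕ) : ZMod m) := by
      rw [← g_prod (fun x hx => uni_gen (hl x hx)) i, hprod, g_genList i hi]
    have hrb := row_bound hm (l.map (g · i))
      (fun x hx => by
        obtain ⟨y, hy, rfl⟩ := List.mem_map.mp hx
        exact hval y hy i) hsum
    rwa [List.countP_map] at hrb
  have huniq : ∀ x ∈ l, ∀ i₁ i₂ : Fin n,
      (fun i : Fin n => fun x => decide (g x i ≠ 0)) i₁ x = true →
      (fun i : Fin n => fun x => decide (g x i ≠ 0)) i₂ x = true → i₁ = i₂ := by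
    intro x hx i₁ i₂ h₁ h₂
    simp only [decide_eq_true_eq] at h₁ h₂
    obtain ⟨a, b, hab, h | h⟩ := hl x hx <;> subst h
    · rw [g_one_add a b hab 1 i₁] at h₁
      rw [g_one_add a b hab 1 i₂] at h₂
      by_cases e₁ : i₁ = a
      · by_cases e₂ : i₂ = a
        · rw [e₁, e₂]
        · rw [if_neg e₂] at h₂; exact absurd rfl h₂
      · rw [if_neg e₁] at h₁; exact absurd rfl h₁
    · rw [g_one_sub a b hab 1 i₁] at h₁
      rw [g_one_sub a b hab 1 i₂] at h₂
      by_cases e₁ : i₁ = a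
      · by_cases e₂ : i₂ = a
        · rw [e₁, e₂]
        · rw [if_neg e₂] at h₂; exact absurd rfl h₂
      · rw [if_neg e₁] at h₁; exact absurd rfl h₁
  have htot := sum_countP_le l (fun i : Fin n => fun x => decide (g x i ≠ 0)) huniq
  have hcard : (Finset.univ.filter (fun i : Fin n => (i : ℕ) + 1 < n)).card = n - 1 := by
    have hset : (Finset.univ.filter (fun i : Fin n => (i : ℕ) + 1 < n))
        = Finset.univ.erase (⟨n - 1, by omega⟩ : Fin n) := by
      ext i
      have hv : ((⟨n - 1, by omega⟩ : Fin n) : ℕ) = n - 1 := rfl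
      simp only [Finset.mem_filter, Finset.mem_univ, true_and, Finset.mem_erase, and_true,
        Ne, Fin.ext_iff, hv]
      have := i.isLt
      omega
    rw [hset, Finset.card_erase_of_mem (Finset.mem_univ _), Finset.card_univ, Fintype.card_fin]
  calc (n - 1) * (m / 2)
      = ∑ _i ∈ Finset.univ.filter (fun i : Fin n => (i : ℕ) + 1 < n), m / 2 := by
        rw [Finset.sum_const, hcard, smul_eq_mul]
    _ ≤ ∑ i ∈ Finset.univ.filter (fun i : Fin n => (i : ℕ) + 1 < n),
          l.countP (fun x => decide (g x i ≠ 0)) := by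
        apply Finset.sum_le_sum
        intro i hi
        exact key i (Finset.mem_filter.mp hi).2
    _ ≤ ∑ i : Fin n, l.countP (fun x => decide (g x i ≠ 0)) :=
        Finset.sum_le_sum_of_subset (Finset.filter_subset _ _)
    _ ≤ l.length := htot
end
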